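/- arXiv:2104.10799 — 3 statements merged into one kernel-verified Lean document; each statement's English description precedes it below -/
import Mathlib

section
/- Let d ≥ 2 be a natural number and let X = (X_1, …, X_d) be a Latin hypercube sample of N = d points in [0,1)^d. Then the D^2_0-correlation number satisfies γ_{D^2_0}(X) ≥ 2 when d = 2. -/
open MeasureTheory ProbabilityTheory Filter
open scoped ENNReal Classical

namespace LHSPaper

/-- The anchored box `[0,a) = ∏_i [0, a_i)` in `[0,1)^d`. -/
def anchoredBox {d : ℕ} (a : Fin d → ℝ) : Set (Fin d → ℝ) := {x | ∀ i, x i ∈ Set.Ico 0 (a i)}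

/-- `C^d_0`, the collection of anchored boxes `[0,a)` with `a ∈ [0,1]^d`. -/
def anchoredBoxes (d : ℕ) : Set (Set (Fin d → ℝ)) :=
  {S | ∃ a : Fin d → ℝ, (∀ i, a i ∈ Set.Icc (0 : ℝ) 1) ∧ S = anchoredBox a}

/-- `D^d_0`, the collection of differences `B \ A` of anchored boxes. -/
def boxDiffs (d : ℕ) : Set (Set (Fin d → ℝ)) :=
  {S | ∃ A ∈ anchoredBoxes d, ∃ B ∈ anchoredBoxes d, S = B \ A}

/-- The half-open unit cube `[0,1)^d`. -/
def unitCube (d : ℕ) : Set (Fin d → ℝ) := {x | ∀ i, x i ∈ Set.Ico (0 : ℝ) 1}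

/-- `γ`-negative dependence of the indicators of the events `A 1, …, A N`. -/
def GammaNegDep {Ω : Type*} [MeasurableSpace Ω] (μ : Measure Ω) {N : ℕ}
    (γ : ℝ≥0∞) (A : Fin N → Set Ω) : Prop :=
  ∀ J : Finset (Fin N), J.Nonempty →
    μ (⋂ j ∈ J, A j) ≤ γ * ∏ j ∈ J, μ (A j) ∧
    μ (⋂ j ∈ J, (A j)ᶜ) ≤ γ * ∏ j ∈ J, μ (A j)ᶜ

/-- The `𝒮`-correlation number of a random point tuple `X`. -/
noncomputable def corrNum {Ω : Type*} [MeasurableSpace Ω] (μ : Measure Ω) {N d : ℕ}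
    (𝒮 : Set (Set (Fin d → ℝ))) (X : Fin N → Ω → Fin d → ℝ) : ℝ≥0∞ :=
  ⨆ (S : Set (Fin d → ℝ)) (_ : S ∈ 𝒮) (J : Finset (Fin N)) (_ : J.Nonempty),
    max (μ (⋂ j ∈ J, {ω | X j ω ∈ S}) / ∏ j ∈ J, μ {ω | X j ω ∈ S})
        (μ (⋂ j ∈ J, {ω | X j ω ∉ S}) / ∏ j ∈ J, μ {ω | X j ω ∉ S})

instance (N : ℕ) : MeasurableSpace (Equiv.Perm (Fin N)) := ⊤

instance (N : ℕ) : Nonempty (Equiv.Perm (Fin N)) := ⟨Equiv.refl _⟩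

/-- Value types of the sources of randomness of a Latin hypercube sample:
`d` random permutations and `N·d` random reals. -/
def lhsβ (d N : ℕ) : (Fin d ⊕ (Fin N × Fin d)) → Type :=
  fun i => Sum.elim (fun _ => Equiv.Perm (Fin N)) (fun _ => ℝ) i

noncomputable def lhsMS (d N : ℕ) : (i : Fin d ⊕ (Fin N × Fin d)) → MeasurableSpace (lhsβ d N i) :=
  fun i => match i with
  | .inl _ => ⊤
  | .inr _ => inferInstanceAs (MeasurableSpace ℝ)

def lhsFun {Ω : Type*} {d N : ℕ} (π : Fin d → Ω → Equiv.Perm (Fin N))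
    (U : Fin N → Ω → Fin d → ℝ) : (i : Fin d ⊕ (Fin N × Fin d)) → Ω → lhsβ d N i :=
  fun i => match i with
  | .inl j => π j
  | .inr p => fun ω => U p.1 ω p.2

/-- `X` is a Latin hypercube sample of `N` points in `[0,1)^d`, built from the
uniformly distributed random permutations `π_j` and the uniformly distributed
random variables `U_{n,j}`, all mutually independent. -/
def IsLHS {Ω : Type*} [MeasurableSpace Ω] (μ : Measure Ω) (d N : ℕ)
    (X : Fin N → Ω → Fin d → ℝ)
    (π : Fin d → Ω → Equiv.Perm (Fin N)) (U : Fin N → Ω → Fin d → ℝ) : Prop :=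
  (∀ j, Measure.map (π j) μ = (PMF.uniformOfFintype (Equiv.Perm (Fin N))).toMeasure) ∧
  (∀ n j, Measure.map (fun ω => U n ω j) μ = volume.restrict (Set.Ico (0 : ℝ) 1)) ∧
  iIndepFun (m := lhsMS d N) (lhsFun π U) μ ∧
  (∀ n j ω, X n ω j = (((π j ω) n : ℕ) + U n ω j) / N)

/-- An elementary interval in base `b` of order `k` in `[0,1)^d`. -/
def IsElemInterval (b d k : ℕ) (E : Set (Fin d → ℝ)) : Prop :=
  ∃ ℓ : Fin d → ℕ, ∃ a : Fin d → ℕ, (∀ i, a i < b ^ ℓ i) ∧ (∑ i, ℓ i = k) ∧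
    E = {x | ∀ i, x i ∈ Set.Ico ((a i : ℝ) / b ^ ℓ i) (((a i : ℝ) + 1) / b ^ ℓ i)}

/-- A `(t,m,d)`-net in base `b`: `b^m` points in `[0,1)^d` such that every elementary
interval of order `m - t` contains exactly `b^t` points (with multiplicity). -/
def IsNet (b d m t : ℕ) (P : Fin (b ^ m) → Fin d → ℝ) : Prop :=
  (∀ n, P n ∈ unitCube d) ∧
  ∀ E : Set (Fin d → ℝ), IsElemInterval b d (m - t) E →
    (Finset.univ.filter fun n => P n ∈ E).card = b ^ t

/-- A `b`-ary scrambling of depth `ℓ`: a self-map of `[0,1)` mapping, for each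
`k ∈ {1,…,ℓ}`, elementary intervals of order `k` into elementary intervals of order `k`,
distinct ones into distinct ones. -/
def IsScrambling (b ℓ : ℕ) (σ : ℝ → ℝ) : Prop :=
  (∀ x ∈ Set.Ico (0 : ℝ) 1, σ x ∈ Set.Ico (0 : ℝ) 1) ∧
  ∀ k, 1 ≤ k → k ≤ ℓ → ∃ f : ℕ → ℕ,
    (∀ a < b ^ k, f a < b ^ k) ∧
    (∀ a < b ^ k, ∀ a' < b ^ k, a ≠ a' → f a ≠ f a') ∧
    (∀ a < b ^ k, ∀ x ∈ Set.Ico ((a : ℝ) / b ^ k) (((a : ℝ) + 1) / b ^ k),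
      σ x ∈ Set.Ico ((f a : ℝ) / b ^ k) (((f a : ℝ) + 1) / b ^ k))

/-- A basic cube of an abstract scrambled `(t,m,d)`-net in base `b`. -/
def IsBasicCube (b d m t : ℕ) (C : Set (Fin d → ℝ)) : Prop :=
  ∃ k : Fin d → ℕ, (∀ j, k j < b ^ (m - t)) ∧
    C = {x | ∀ j, x j ∈ Set.Ico ((k j : ℝ) / b ^ (m - t)) (((k j : ℝ) + 1) / b ^ (m - t))}

/-- An abstract scrambled `(t,m,d)`-net in base `b`. -/
def IsAbstractScrambledNet {Ω : Type*} [MeasurableSpace Ω] (μ : Measure Ω)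
    (b d m t : ℕ) (Y : Fin (b ^ m) → Ω → (Fin d → ℝ)) : Prop :=
  (∀ᵐ ω ∂μ, IsNet b d m t fun n => Y n ω) ∧
  (∀ i C, IsBasicCube b d m t C → μ {ω | Y i ω ∈ C} = ((b : ℝ≥0∞) ^ (d * (m - t)))⁻¹) ∧
  (∀ M : Set (Fin d → ℝ), MeasurableSet M →
    ∀ J : Finset (Fin (b ^ m)), J.Nonempty →
    ∀ C : Fin (b ^ m) → Set (Fin d → ℝ), (∀ j ∈ J, IsBasicCube b d m t (C j)) →
      μ (⋂ j ∈ J, {ω | Y j ω ∈ C j}) ≠ 0 →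
      (μ[|⋂ j ∈ J, {ω | Y j ω ∈ C j}]) (⋂ j ∈ J, {ω | Y j ω ∈ M}) =
        ∏ j ∈ J, volume (M ∩ C j) / volume (C j))


section Aux
variable {Ω : Type*} [MeasurableSpace Ω] {μ : Measure Ω} [IsProbabilityMeasure μ]
  {X : Fin 2 → Ω → Fin 2 → ℝ} {π : Fin 2 → Ω → Equiv.Perm (Fin 2)}
  {U : Fin 2 → Ω → Fin 2 → ℝ}

lemma pi_aemeasurable (h : IsLHS μ 2 2 X π U) (j : Fin 2) : AEMeasurable (π j) μ := by
  by_contra hc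
  have h0 := Measure.map_of_not_aemeasurable (f := π j) (μ := μ) hc
  rw [h.1 j] at h0
  exact IsProbabilityMeasure.ne_zero _ h0

lemma U_aemeasurable (h : IsLHS μ 2 2 X π U) (n j : Fin 2) :
    AEMeasurable (fun ω => U n ω j) μ := by
  by_contra hc
  have h0 := Measure.map_of_not_aemeasurable (f := fun ω => U n ω j) (μ := μ) hc
  rw [h.2.1 n j] at h0
  have : (volume.restrict (Set.Ico (0:ℝ) 1)) Set.univ = 1 := by
    simp [Measure.restrict_apply, Real.volume_Ico]
  rw [h0] at this
  simp at this

lemma perm_measure (h : IsLHS μ 2 2 X π U) (j : Fin 2) (σ : Equiv.Perm (Fin 2)) :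
    μ (π j ⁻¹' {σ}) = 2⁻¹ := by
  rw [← Measure.map_apply_of_aemeasurable (pi_aemeasurable h j) (by trivial)]
  rw [h.1 j, PMF.toMeasure_apply_singleton _ _ (by trivial), PMF.uniformOfFintype_apply]
  simp [Fintype.card_perm]

lemma U_measure (h : IsLHS μ 2 2 X π U) (n j : Fin 2) (I : Set ℝ) (hI : MeasurableSet I) :
    μ ((fun ω => U n ω j) ⁻¹' I) = volume (I ∩ Set.Ico 0 1) := by
  rw [← Measure.map_apply_of_aemeasurable (U_aemeasurable h n j) hI, h.2.1 n j,
    Measure.restrict_apply' measurableSet_Ico]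

end Aux

section Aux2
set_option linter.unusedSectionVars false
variable {Ω : Type*} [MeasurableSpace Ω] {μ : Measure Ω} [IsProbabilityMeasure μ]
  {X : Fin 2 → Ω → Fin 2 → ℝ} {π : Fin 2 → Ω → Equiv.Perm (Fin 2)}
  {U : Fin 2 → Ω → Fin 2 → ℝ}

lemma prodSix (h : IsLHS μ 2 2 X π U) (P : Fin 2 → Equiv.Perm (Fin 2))
    (I : Fin 2 → Fin 2 → Set ℝ) (hI : ∀ n j, MeasurableSet (I n j)) :
    μ ((⋂ j, π j ⁻¹' {P j}) ∩ ⋂ p : Fin 2 × Fin 2, (fun ω => U p.1 ω p.2) ⁻¹' I p.1 p.2)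
      = 2⁻¹ * 2⁻¹ * ∏ p : Fin 2 × Fin 2, volume (I p.1 p.2 ∩ Set.Ico 0 1) := by
  classical
  set s : (Fin 2 ⊕ (Fin 2 × Fin 2)) → Set Ω := fun i =>
    match i with
    | .inl j => π j ⁻¹' {P j}
    | .inr p => (fun ω => U p.1 ω p.2) ⁻¹' I p.1 p.2 with hs
  have h1 : ((⋂ j, π j ⁻¹' {P j}) ∩ ⋂ p : Fin 2 × Fin 2,
      (fun ω => U p.1 ω p.2) ⁻¹' I p.1 p.2) = ⋂ i, s i := by
    ext ω
    simp only [Set.mem_inter_iff, Set.mem_iInter, Sum.forall, hs]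
  rw [h1, h.2.2.1.meas_iInter]
  · rw [Fintype.prod_sum_type, Fin.prod_univ_two]
    simp only [hs]
    rw [perm_measure h 0, perm_measure h 1]
    congr 1
    exact Finset.prod_congr rfl fun p _ => U_measure h p.1 p.2 (I p.1 p.2) (hI p.1 p.2)
  · rintro (j | p)
    · exact ⟨{P j}, trivial, rfl⟩
    · exact ⟨I p.1 p.2, hI p.1 p.2, rfl⟩

end Aux2

section Aux3
set_option linter.unusedSectionVars false
variable {Ω : Type*} [MeasurableSpace Ω] {μ : Measure Ω} [IsProbabilityMeasure μ]
  {X : Fin 2 → Ω → Fin 2 → ℝ} {π : Fin 2 → Ω → Equiv.Perm (Fin 2)}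
  {U : Fin 2 → Ω → Fin 2 → ℝ}

lemma memX (h : IsLHS μ 2 2 X π U) (n j : Fin 2) (ω : Ω) (t : ℝ) :
    X n ω j ∈ Set.Ico 0 t ↔
      U n ω j ∈ Set.Ico (-(((π j ω) n : ℕ) : ℝ)) (2*t - ((π j ω) n : ℕ)) := by
  have hx := h.2.2.2 n j ω
  simp only [Set.mem_Ico] at *
  rw [hx]
  push_cast
  constructor <;> rintro ⟨h1, h2⟩ <;> constructor <;> linarith

lemma split4 (h : IsLHS μ 2 2 X π U) (T : Set Ω) :
    μ T = μ (T ∩ (π 0 ⁻¹' {1} ∩ π 1 ⁻¹' {1}))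
        + μ (T ∩ (π 0 ⁻¹' {1} ∩ π 1 ⁻¹' {Equiv.swap 0 1}))
        + μ (T ∩ (π 0 ⁻¹' {Equiv.swap 0 1} ∩ π 1 ⁻¹' {1}))
        + μ (T ∩ (π 0 ⁻¹' {Equiv.swap 0 1} ∩ π 1 ⁻¹' {Equiv.swap 0 1})) := by
  have key : ∀ (s : Set Ω) (j : Fin 2),
      μ s = μ (s ∩ π j ⁻¹' {1}) + μ (s ∩ π j ⁻¹' {Equiv.swap 0 1}) := by
    intro s j
    have hnm : NullMeasurableSet (π j ⁻¹' {1}) μ :=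
      (pi_aemeasurable h j).nullMeasurableSet_preimage (by trivial)
    have hd : s \ π j ⁻¹' {1} = s ∩ π j ⁻¹' {Equiv.swap 0 1} := by
      have hall : ∀ σ : Equiv.Perm (Fin 2), ¬σ = 1 ↔ σ = Equiv.swap 0 1 := by decide
      ext ω
      simp only [Set.mem_diff, Set.mem_inter_iff, Set.mem_preimage, Set.mem_singleton_iff]
      exact and_congr_right fun _ => hall _
    rw [← measure_inter_add_diff₀ s hnm, hd]
  rw [key T 0, key (T ∩ π 0 ⁻¹' {1}) 1, key (T ∩ π 0 ⁻¹' {Equiv.swap 0 1}) 1]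
  simp only [Set.inter_assoc]
  ring

lemma U_notmem_null (h : IsLHS μ 2 2 X π U) (n j : Fin 2) :
    μ {ω | U n ω j ∉ Set.Ico (0:ℝ) 1} = 0 := by
  have h1 : μ ((fun ω => U n ω j) ⁻¹' Set.Ico (0:ℝ) 1) = 1 := by
    rw [U_measure h n j _ measurableSet_Ico, Set.inter_self, Real.volume_Ico]
    norm_num
  have hnm := (U_aemeasurable h n j).nullMeasurableSet_preimage (measurableSet_Ico (a := (0:ℝ)) (b := 1))
  have h2 := measure_compl₀ hnm (by simp [h1])
  have h3 : {ω | U n ω j ∉ Set.Ico (0:ℝ) 1} = ((fun ω => U n ω j) ⁻¹' Set.Ico (0:ℝ) 1)ᶜ := rfl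
  rw [h3, h2, h1, measure_univ, tsub_self]

lemma U_neg_null (h : IsLHS μ 2 2 X π U) (n j : Fin 2) :
    μ {ω | U n ω j ∈ Set.Ico (-1:ℝ) 0} = 0 := by
  have h1 : μ ((fun ω => U n ω j) ⁻¹' Set.Ico (-1:ℝ) 0) = 0 := by
    rw [U_measure h n j _ measurableSet_Ico]
    have : Set.Ico (-1:ℝ) 0 ∩ Set.Ico 0 1 = ∅ := by
      ext x
      simp only [Set.mem_inter_iff, Set.mem_Ico, Set.mem_empty_iff_false, iff_false, not_and]
      rintro ⟨_, h2⟩ h3 _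
      linarith
    rw [this]
    simp
  exact h1

end Aux3

section Aux4
set_option linter.unusedSectionVars false
variable {Ω : Type*} [MeasurableSpace Ω] {μ : Measure Ω} [IsProbabilityMeasure μ]
  {X : Fin 2 → Ω → Fin 2 → ℝ} {π : Fin 2 → Ω → Equiv.Perm (Fin 2)}
  {U : Fin 2 → Ω → Fin 2 → ℝ}

lemma piece_prod (h : IsLHS μ 2 2 X π U) (σ τ : Equiv.Perm (Fin 2))
    (I : Fin 2 → Fin 2 → Set ℝ) (hI : ∀ n j, MeasurableSet (I n j)) (T N : Set Ω)
    (hN : μ N = 0)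
    (hiff : ∀ ω, ω ∉ N → π 0 ω = σ → π 1 ω = τ →
      (ω ∈ T ↔ (U 0 ω 0 ∈ I 0 0 ∧ U 0 ω 1 ∈ I 0 1) ∧ (U 1 ω 0 ∈ I 1 0 ∧ U 1 ω 1 ∈ I 1 1))) :
    μ (T ∩ (π 0 ⁻¹' {σ} ∩ π 1 ⁻¹' {τ}))
      = 2⁻¹ * 2⁻¹ * ∏ p : Fin 2 × Fin 2, volume (I p.1 p.2 ∩ Set.Ico 0 1) := by
  rw [← prodSix h ![σ, τ] I hI]
  apply measure_congr
  rw [Filter.eventuallyEq_set]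
  have hae : ∀ᵐ ω ∂μ, ω ∉ N := by
    rw [MeasureTheory.ae_iff]
    simpa using hN
  filter_upwards [hae] with ω hω
  simp only [Set.mem_inter_iff, Set.mem_iInter, Set.mem_preimage, Set.mem_singleton_iff,
    Fin.forall_fin_two, Matrix.cons_val_zero, Matrix.cons_val_one, Matrix.head_cons]
  constructor
  · rintro ⟨hT, h0, h1⟩
    refine ⟨⟨h0, h1⟩, ?_⟩
    have hc := (hiff ω hω h0 h1).1 hT
    intro p
    rcases p with ⟨n', j'⟩
    fin_cases n' <;> fin_cases j'
    exacts [hc.1.1, hc.1.2, hc.2.1, hc.2.2]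
  · rintro ⟨⟨h0, h1⟩, hU⟩
    exact ⟨(hiff ω hω h0 h1).2 ⟨⟨hU (0,0), hU (0,1)⟩, hU (1,0), hU (1,1)⟩, h0, h1⟩

end Aux4

section Main
set_option linter.unusedSectionVars false
set_option maxHeartbeats 2000000
variable {Ω : Type*} [MeasurableSpace Ω] {μ : Measure Ω} [IsProbabilityMeasure μ]
  {X : Fin 2 → Ω → Fin 2 → ℝ} {π : Fin 2 → Ω → Equiv.Perm (Fin 2)}
  {U : Fin 2 → Ω → Fin 2 → ℝ}

lemma main_est (h : IsLHS μ 2 2 X π U) (δ : ℝ) (hδ0 : 0 < δ) (hδ1 : δ ≤ 1/4) :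
    ENNReal.ofReal (2 / (1+δ)^2) ≤ corrNum μ (boxDiffs 2) X := by
  classical
  set S : Set (Fin 2 → ℝ) :=
    anchoredBox (fun _ => 1/2 + δ) \ anchoredBox (fun _ => (1/2:ℝ)) with hSdef
  have hS : S ∈ boxDiffs 2 := by
    refine ⟨anchoredBox (fun _ => (1/2:ℝ)), ⟨fun _ => (1/2:ℝ), fun i => ⟨by norm_num, by norm_num⟩, rfl⟩,
      anchoredBox (fun _ => 1/2 + δ), ⟨fun _ => 1/2 + δ, fun i => ⟨by linarith, by linarith⟩, rfl⟩, rfl⟩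
  -- membership characterization
  have hSmem : ∀ (n : Fin 2) (ω : Ω), X n ω ∈ S ↔
      ((U n ω 0 ∈ Set.Ico (-(((π 0 ω) n : ℕ):ℝ)) (1 + 2*δ - ((π 0 ω) n : ℕ)) ∧
        U n ω 1 ∈ Set.Ico (-(((π 1 ω) n : ℕ):ℝ)) (1 + 2*δ - ((π 1 ω) n : ℕ))) ∧
       ¬(U n ω 0 ∈ Set.Ico (-(((π 0 ω) n : ℕ):ℝ)) (1 - ((π 0 ω) n : ℕ)) ∧
         U n ω 1 ∈ Set.Ico (-(((π 1 ω) n : ℕ):ℝ)) (1 - ((π 1 ω) n : ℕ)))) := by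
    intro n ω
    have e1 : ∀ k : ℝ, Set.Ico (-k) (2*(1/2+δ) - k) = Set.Ico (-k) (1 + 2*δ - k) := by
      intro k; congr 1; ring
    have e2 : ∀ k : ℝ, Set.Ico (-k) (2*(1/2:ℝ) - k) = Set.Ico (-k) (1 - k) := by
      intro k; congr 1; ring
    rw [hSdef]
    simp only [Set.mem_diff, anchoredBox, Set.mem_setOf_eq, Fin.forall_fin_two]
    rw [memX h n 0 ω (1/2+δ), memX h n 1 ω (1/2+δ), memX h n 0 ω (1/2:ℝ), memX h n 1 ω (1/2:ℝ),
      e1, e1, e2, e2]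
  -- zero pieces
  have hzero : ∀ (n : Fin 2) (σ τ : Equiv.Perm (Fin 2)), σ n = 0 → τ n = 0 →
      ∀ T : Set Ω, T ⊆ {ω | X n ω ∈ S} →
      μ (T ∩ (π 0 ⁻¹' {σ} ∩ π 1 ⁻¹' {τ})) = 0 := by
    intro n σ τ hσ hτ T hT
    refine le_antisymm ?_ zero_le
    have hsub : T ∩ (π 0 ⁻¹' {σ} ∩ π 1 ⁻¹' {τ}) ⊆
        {ω | U n ω 0 ∉ Set.Ico (0:ℝ) 1} ∪ {ω | U n ω 1 ∉ Set.Ico (0:ℝ) 1} := by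
      rintro ω ⟨hTω, h0, h1⟩
      rw [Set.mem_preimage, Set.mem_singleton_iff] at h0 h1
      have hmem := (hSmem n ω).1 (hT hTω)
      rw [h0, h1, hσ, hτ] at hmem
      simp only [Fin.val_zero, Nat.cast_zero, neg_zero, sub_zero] at hmem
      by_contra hcon
      simp only [Set.mem_union, Set.mem_setOf_eq, not_or, not_not] at hcon
      exact hmem.2 ⟨hcon.1, hcon.2⟩
    calc μ (T ∩ (π 0 ⁻¹' {σ} ∩ π 1 ⁻¹' {τ}))
        ≤ μ ({ω | U n ω 0 ∉ Set.Ico (0:ℝ) 1} ∪ {ω | U n ω 1 ∉ Set.Ico (0:ℝ) 1}) :=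
          measure_mono hsub
      _ ≤ μ {ω | U n ω 0 ∉ Set.Ico (0:ℝ) 1} + μ {ω | U n ω 1 ∉ Set.Ico (0:ℝ) 1} :=
          measure_union_le _ _
      _ = 0 := by rw [U_notmem_null h n 0, U_notmem_null h n 1, add_zero]
  -- basic facts
  have hc0 : (Equiv.swap (0:Fin 2) 1) 0 = 1 := by decide
  have hc1 : (Equiv.swap (0:Fin 2) 1) 1 = 0 := by decide
  have vol1 : volume (Set.Ico (0:ℝ) (1+2*δ) ∩ Set.Ico 0 1) = 1 := by
    rw [Set.inter_eq_right.mpr (Set.Ico_subset_Ico_right (by linarith)), Real.volume_Ico]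
    norm_num
  have vol2 : volume (Set.Ico (-1:ℝ) (2*δ) ∩ Set.Ico 0 1) = ENNReal.ofReal (2*δ) := by
    have e : Set.Ico (-1:ℝ) (2*δ) ∩ Set.Ico 0 1 = Set.Ico 0 (2*δ) := by
      ext x
      simp only [Set.mem_inter_iff, Set.mem_Ico]
      constructor
      · rintro ⟨⟨_, h2⟩, h3, _⟩; exact ⟨h3, h2⟩
      · rintro ⟨h1, h2⟩; exact ⟨⟨by linarith, h2⟩, h1, by linarith⟩
    rw [e, Real.volume_Ico, sub_zero]
  have vol3 : volume ((Set.univ : Set ℝ) ∩ Set.Ico 0 1) = 1 := by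
    rw [Set.univ_inter, Real.volume_Ico]
    norm_num
  have prodeval : ∀ I : Fin 2 → Fin 2 → Set ℝ,
      (∏ p : Fin 2 × Fin 2, volume (I p.1 p.2 ∩ Set.Ico 0 1))
        = volume (I 0 0 ∩ Set.Ico 0 1) * volume (I 0 1 ∩ Set.Ico 0 1) *
          (volume (I 1 0 ∩ Set.Ico 0 1) * volume (I 1 1 ∩ Set.Ico 0 1)) := by
    intro I
    rw [Fintype.prod_prod_type, Fin.prod_univ_two, Fin.prod_univ_two, Fin.prod_univ_two]
  -- joint event
  have hT : μ ({ω | X 0 ω ∈ S} ∩ {ω | X 1 ω ∈ S}) = ENNReal.ofReal (2*δ^2) := by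
    set T : Set Ω := {ω | X 0 ω ∈ S} ∩ {ω | X 1 ω ∈ S} with hTdef
    have hz1 : μ (T ∩ (π 0 ⁻¹' {1} ∩ π 1 ⁻¹' {1})) = 0 :=
      hzero 0 1 1 rfl rfl T Set.inter_subset_left
    have hz2 : μ (T ∩ (π 0 ⁻¹' {Equiv.swap 0 1} ∩ π 1 ⁻¹' {Equiv.swap 0 1})) = 0 :=
      hzero 1 (Equiv.swap 0 1) (Equiv.swap 0 1) hc1 hc1 T Set.inter_subset_right
    have hp1 : μ (T ∩ (π 0 ⁻¹' {1} ∩ π 1 ⁻¹' {Equiv.swap 0 1})) = ENNReal.ofReal (δ^2) := by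
      rw [piece_prod h 1 (Equiv.swap 0 1)
        ![![Set.Ico (0:ℝ) (1+2*δ), Set.Ico (-1:ℝ) (2*δ)],
          ![Set.Ico (-1:ℝ) (2*δ), Set.Ico (0:ℝ) (1+2*δ)]]
        (by intro n j; fin_cases n <;> fin_cases j <;>
              simp only [Matrix.cons_val_zero, Matrix.cons_val_one, Matrix.head_cons] <;>
              exact measurableSet_Ico)
        T ({ω | U 0 ω 1 ∈ Set.Ico (-1:ℝ) 0} ∪ {ω | U 1 ω 0 ∈ Set.Ico (-1:ℝ) 0})
        (le_antisymm (le_trans (measure_union_le _ _)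
          (by rw [U_neg_null h 0 1, U_neg_null h 1 0, add_zero])) zero_le)
        ?_]
      · rw [prodeval]
        simp only [Matrix.cons_val_zero, Matrix.cons_val_one, Matrix.head_cons]
        rw [vol1, vol2]
        rw [one_mul, mul_one, ← ENNReal.ofReal_mul (by positivity)]
        rw [show ((2:ℝ≥0∞))⁻¹ = ENNReal.ofReal 2⁻¹ by
          rw [ENNReal.ofReal_inv_of_pos (by norm_num)]; norm_num]
        rw [← ENNReal.ofReal_mul (by norm_num), ← ENNReal.ofReal_mul (by positivity)]
        congr 1
        ring
      · intro ω hω h0 h1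
        simp only [Set.mem_union, Set.mem_setOf_eq, not_or, Set.mem_Ico, not_and, not_lt] at hω
        obtain ⟨hω1, hω2⟩ := hω
        have hm0 := hSmem 0 ω
        have hm1 := hSmem 1 ω
        rw [h0, h1] at hm0 hm1
        simp only [Equiv.Perm.one_apply, hc0, hc1, Fin.val_zero, Fin.val_one, Nat.cast_zero,
          Nat.cast_one, neg_zero, sub_zero, Set.mem_Ico] at hm0 hm1
        constructor
        · rintro ⟨hx0, hx1⟩
          obtain ⟨⟨a1, a2⟩, a3, a4⟩ := (hm0.1 hx0).1
          obtain ⟨⟨b1, b2⟩, b3, b4⟩ := (hm1.1 hx1).1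
          simp only [Matrix.cons_val_zero, Matrix.cons_val_one, Matrix.head_cons, Set.mem_Ico]
          exact ⟨⟨⟨by linarith, by linarith⟩, by linarith, by linarith⟩,
            ⟨by linarith, by linarith⟩, by linarith, by linarith⟩
        · intro hU
          obtain ⟨⟨h00, h01⟩, h10, h11⟩ := hU
          simp only [Matrix.cons_val_zero, Matrix.cons_val_one, Matrix.head_cons,
            Set.mem_Ico] at h00 h01 h10 h11
          refine ⟨hm0.2 ⟨⟨⟨h00.1, h00.2⟩, h01.1, by linarith [h01.2]⟩, ?_⟩,
            hm1.2 ⟨⟨⟨h10.1, by linarith [h10.2]⟩, h11.1, h11.2⟩, ?_⟩⟩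
          · rintro ⟨-, hA⟩
            have := hω1 hA.1
            linarith [hA.2]
          · rintro ⟨hA, -⟩
            have := hω2 hA.1
            linarith [hA.2]
    have hp2 : μ (T ∩ (π 0 ⁻¹' {Equiv.swap 0 1} ∩ π 1 ⁻¹' {1})) = ENNReal.ofReal (δ^2) := by
      rw [piece_prod h (Equiv.swap 0 1) 1
        ![![Set.Ico (-1:ℝ) (2*δ), Set.Ico (0:ℝ) (1+2*δ)],
          ![Set.Ico (0:ℝ) (1+2*δ), Set.Ico (-1:ℝ) (2*δ)]]
        (by intro n j; fin_cases n <;> fin_cases j <;>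
              simp only [Matrix.cons_val_zero, Matrix.cons_val_one, Matrix.head_cons] <;>
              exact measurableSet_Ico)
        T ({ω | U 0 ω 0 ∈ Set.Ico (-1:ℝ) 0} ∪ {ω | U 1 ω 1 ∈ Set.Ico (-1:ℝ) 0})
        (le_antisymm (le_trans (measure_union_le _ _)
          (by rw [U_neg_null h 0 0, U_neg_null h 1 1, add_zero])) zero_le)
        ?_]
      · rw [prodeval]
        simp only [Matrix.cons_val_zero, Matrix.cons_val_one, Matrix.head_cons]
        rw [vol1, vol2]
        rw [one_mul, mul_one, ← ENNReal.ofReal_mul (by positivity)]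
        rw [show ((2:ℝ≥0∞))⁻¹ = ENNReal.ofReal 2⁻¹ by
          rw [ENNReal.ofReal_inv_of_pos (by norm_num)]; norm_num]
        rw [← ENNReal.ofReal_mul (by norm_num), ← ENNReal.ofReal_mul (by positivity)]
        congr 1
        ring
      · intro ω hω h0 h1
        simp only [Set.mem_union, Set.mem_setOf_eq, not_or, Set.mem_Ico, not_and, not_lt] at hω
        obtain ⟨hω1, hω2⟩ := hω
        have hm0 := hSmem 0 ω
        have hm1 := hSmem 1 ω
        rw [h0, h1] at hm0 hm1
        simp only [Equiv.Perm.one_apply, hc0, hc1, Fin.val_zero, Fin.val_one, Nat.cast_zero,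
          Nat.cast_one, neg_zero, sub_zero, Set.mem_Ico] at hm0 hm1
        constructor
        · rintro ⟨hx0, hx1⟩
          obtain ⟨⟨a1, a2⟩, a3, a4⟩ := (hm0.1 hx0).1
          obtain ⟨⟨b1, b2⟩, b3, b4⟩ := (hm1.1 hx1).1
          simp only [Matrix.cons_val_zero, Matrix.cons_val_one, Matrix.head_cons, Set.mem_Ico]
          exact ⟨⟨⟨by linarith, by linarith⟩, by linarith, by linarith⟩,
            ⟨by linarith, by linarith⟩, by linarith, by linarith⟩
        · intro hU
          obtain ⟨⟨h00, h01⟩, h10, h11⟩ := hU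
          simp only [Matrix.cons_val_zero, Matrix.cons_val_one, Matrix.head_cons,
            Set.mem_Ico] at h00 h01 h10 h11
          refine ⟨hm0.2 ⟨⟨⟨h00.1, by linarith [h00.2]⟩, h01.1, h01.2⟩, ?_⟩,
            hm1.2 ⟨⟨⟨h10.1, h10.2⟩, h11.1, by linarith [h11.2]⟩, ?_⟩⟩
          · rintro ⟨hA, -⟩
            have := hω1 hA.1
            linarith [hA.2]
          · rintro ⟨-, hA⟩
            have := hω2 hA.1
            linarith [hA.2]
    rw [split4 h T, hz1, hz2, hp1, hp2, zero_add, add_zero,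
      ← ENNReal.ofReal_add (by positivity) (by positivity)]
    congr 1
    ring
  have hT0 : μ {ω | X 0 ω ∈ S} = ENNReal.ofReal (δ + δ^2) := by
    set T : Set Ω := {ω | X 0 ω ∈ S} with hTdef
    have hz1 : μ (T ∩ (π 0 ⁻¹' {1} ∩ π 1 ⁻¹' {1})) = 0 :=
      hzero 0 1 1 rfl rfl T subset_rfl
    have hp1 : μ (T ∩ (π 0 ⁻¹' {1} ∩ π 1 ⁻¹' {(Equiv.swap 0 1)})) = ENNReal.ofReal (δ/2) := by
      rw [piece_prod h 1 (Equiv.swap 0 1)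
        ![![Set.Ico (0:ℝ) (1+2*δ), Set.Ico (-1:ℝ) (2*δ)], ![(Set.univ : Set ℝ), Set.univ]]
        (by intro n' j'; fin_cases n' <;> fin_cases j' <;>
              simp only [Matrix.cons_val_zero, Matrix.cons_val_one, Matrix.head_cons] <;>
              first | exact measurableSet_Ico | exact MeasurableSet.univ)
        T {ω | U 0 ω 1 ∈ Set.Ico (-1:ℝ) 0}
        (U_neg_null h 0 1)
        ?_]
      · rw [prodeval]
        simp only [Matrix.cons_val_zero, Matrix.cons_val_one, Matrix.head_cons]
        simp only [vol1, vol2, vol3, one_mul, mul_one]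
        rw [show ((2:ℝ≥0∞))⁻¹ = ENNReal.ofReal 2⁻¹ by
          rw [ENNReal.ofReal_inv_of_pos (by norm_num)]; norm_num]
        rw [← ENNReal.ofReal_mul (by norm_num), ← ENNReal.ofReal_mul (by positivity)]
        congr 1
        ring
      · intro ω hω h0 h1
        simp only [Set.mem_setOf_eq, Set.mem_Ico, not_and, not_lt] at hω
        have hm := hSmem 0 ω
        rw [h0, h1] at hm
        simp only [Equiv.Perm.one_apply, hc0, hc1, Fin.val_zero, Fin.val_one, Nat.cast_zero,
          Nat.cast_one, neg_zero, sub_zero, Set.mem_Ico] at hm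
        constructor
        · intro hx
          obtain ⟨⟨a1, a2⟩, a3, a4⟩ := (hm.1 hx).1
          refine ⟨⟨?_, ?_⟩, ?_, ?_⟩ <;>
            simp only [Matrix.cons_val_zero, Matrix.cons_val_one, Matrix.head_cons, Set.mem_Ico,
              Set.mem_univ] <;>
            first
            | trivial
            | (constructor <;> linarith)
        · rintro ⟨⟨h00, h01⟩, h10, h11⟩
          simp only [Matrix.cons_val_zero, Matrix.cons_val_one, Matrix.head_cons, Set.mem_Ico,
            Set.mem_univ] at h00 h01
          apply hm.2
          refine ⟨⟨⟨?_, ?_⟩, ?_, ?_⟩, ?_⟩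
          · linarith
          · linarith
          · linarith
          · linarith
          · rintro ⟨⟨e1, e2⟩, e3, e4⟩
            have := hω e3
            linarith
    have hp2 : μ (T ∩ (π 0 ⁻¹' {(Equiv.swap 0 1)} ∩ π 1 ⁻¹' {1})) = ENNReal.ofReal (δ/2) := by
      rw [piece_prod h (Equiv.swap 0 1) 1
        ![![Set.Ico (-1:ℝ) (2*δ), Set.Ico (0:ℝ) (1+2*δ)], ![(Set.univ : Set ℝ), Set.univ]]
        (by intro n' j'; fin_cases n' <;> fin_cases j' <;>
              simp only [Matrix.cons_val_zero, Matrix.cons_val_one, Matrix.head_cons] <;>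
              first | exact measurableSet_Ico | exact MeasurableSet.univ)
        T {ω | U 0 ω 0 ∈ Set.Ico (-1:ℝ) 0}
        (U_neg_null h 0 0)
        ?_]
      · rw [prodeval]
        simp only [Matrix.cons_val_zero, Matrix.cons_val_one, Matrix.head_cons]
        simp only [vol1, vol2, vol3, one_mul, mul_one]
        rw [show ((2:ℝ≥0∞))⁻¹ = ENNReal.ofReal 2⁻¹ by
          rw [ENNReal.ofReal_inv_of_pos (by norm_num)]; norm_num]
        rw [← ENNReal.ofReal_mul (by norm_num), ← ENNReal.ofReal_mul (by positivity)]
        congr 1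
        ring
      · intro ω hω h0 h1
        simp only [Set.mem_setOf_eq, Set.mem_Ico, not_and, not_lt] at hω
        have hm := hSmem 0 ω
        rw [h0, h1] at hm
        simp only [Equiv.Perm.one_apply, hc0, hc1, Fin.val_zero, Fin.val_one, Nat.cast_zero,
          Nat.cast_one, neg_zero, sub_zero, Set.mem_Ico] at hm
        constructor
        · intro hx
          obtain ⟨⟨a1, a2⟩, a3, a4⟩ := (hm.1 hx).1
          refine ⟨⟨?_, ?_⟩, ?_, ?_⟩ <;>
            simp only [Matrix.cons_val_zero, Matrix.cons_val_one, Matrix.head_cons, Set.mem_Ico,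
              Set.mem_univ] <;>
            first
            | trivial
            | (constructor <;> linarith)
        · rintro ⟨⟨h00, h01⟩, h10, h11⟩
          simp only [Matrix.cons_val_zero, Matrix.cons_val_one, Matrix.head_cons, Set.mem_Ico,
            Set.mem_univ] at h00 h01
          apply hm.2
          refine ⟨⟨⟨?_, ?_⟩, ?_, ?_⟩, ?_⟩
          · linarith
          · linarith
          · linarith
          · linarith
          · rintro ⟨⟨e1, e2⟩, e3, e4⟩
            have := hω e1
            linarith
    have hp3 : μ (T ∩ (π 0 ⁻¹' {(Equiv.swap 0 1)} ∩ π 1 ⁻¹' {(Equiv.swap 0 1)})) = ENNReal.ofReal (δ^2) := by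
      rw [piece_prod h (Equiv.swap 0 1) (Equiv.swap 0 1)
        ![![Set.Ico (-1:ℝ) (2*δ), Set.Ico (-1:ℝ) (2*δ)], ![(Set.univ : Set ℝ), Set.univ]]
        (by intro n' j'; fin_cases n' <;> fin_cases j' <;>
              simp only [Matrix.cons_val_zero, Matrix.cons_val_one, Matrix.head_cons] <;>
              first | exact measurableSet_Ico | exact MeasurableSet.univ)
        T ({ω | U 0 ω 0 ∈ Set.Ico (-1:ℝ) 0} ∪ {ω | U 0 ω 1 ∈ Set.Ico (-1:ℝ) 0})
        (le_antisymm (le_trans (measure_union_le _ _)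
          (by rw [U_neg_null h 0 0, U_neg_null h 0 1, add_zero])) zero_le)
        ?_]
      · rw [prodeval]
        simp only [Matrix.cons_val_zero, Matrix.cons_val_one, Matrix.head_cons]
        simp only [vol1, vol2, vol3, one_mul, mul_one]
        rw [← ENNReal.ofReal_mul (by positivity)]
        rw [show ((2:ℝ≥0∞))⁻¹ = ENNReal.ofReal 2⁻¹ by
          rw [ENNReal.ofReal_inv_of_pos (by norm_num)]; norm_num]
        rw [← ENNReal.ofReal_mul (by norm_num), ← ENNReal.ofReal_mul (by positivity)]
        congr 1
        ring
      · intro ω hω h0 h1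
        simp only [Set.mem_union, Set.mem_setOf_eq, Set.mem_Ico, not_or, not_and, not_lt] at hω
        obtain ⟨hω1, hω2⟩ := hω
        have hm := hSmem 0 ω
        rw [h0, h1] at hm
        simp only [Equiv.Perm.one_apply, hc0, hc1, Fin.val_zero, Fin.val_one, Nat.cast_zero,
          Nat.cast_one, neg_zero, sub_zero, Set.mem_Ico] at hm
        constructor
        · intro hx
          obtain ⟨⟨a1, a2⟩, a3, a4⟩ := (hm.1 hx).1
          refine ⟨⟨?_, ?_⟩, ?_, ?_⟩ <;>
            simp only [Matrix.cons_val_zero, Matrix.cons_val_one, Matrix.head_cons, Set.mem_Ico,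
              Set.mem_univ] <;>
            first
            | trivial
            | (constructor <;> linarith)
        · rintro ⟨⟨h00, h01⟩, h10, h11⟩
          simp only [Matrix.cons_val_zero, Matrix.cons_val_one, Matrix.head_cons, Set.mem_Ico,
            Set.mem_univ] at h00 h01
          apply hm.2
          refine ⟨⟨⟨?_, ?_⟩, ?_, ?_⟩, ?_⟩
          · linarith
          · linarith
          · linarith
          · linarith
          · rintro ⟨⟨e1, e2⟩, e3, e4⟩
            have := hω1 e1
            linarith
    rw [split4 h T, hz1, hp1, hp2, hp3, zero_add,
      ← ENNReal.ofReal_add (by positivity) (by positivity),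
      ← ENNReal.ofReal_add (by positivity) (by positivity)]
    congr 1
    ring
  have hT1 : μ {ω | X 1 ω ∈ S} = ENNReal.ofReal (δ + δ^2) := by
    set T : Set Ω := {ω | X 1 ω ∈ S} with hTdef
    have hz4 : μ (T ∩ (π 0 ⁻¹' {(Equiv.swap 0 1)} ∩ π 1 ⁻¹' {(Equiv.swap 0 1)})) = 0 :=
      hzero 1 (Equiv.swap 0 1) (Equiv.swap 0 1) hc1 hc1 T subset_rfl
    have hp1 : μ (T ∩ (π 0 ⁻¹' {1} ∩ π 1 ⁻¹' {1})) = ENNReal.ofReal (δ^2) := by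
      rw [piece_prod h 1 1
        ![![(Set.univ : Set ℝ), Set.univ], ![Set.Ico (-1:ℝ) (2*δ), Set.Ico (-1:ℝ) (2*δ)]]
        (by intro n' j'; fin_cases n' <;> fin_cases j' <;>
              simp only [Matrix.cons_val_zero, Matrix.cons_val_one, Matrix.head_cons] <;>
              first | exact measurableSet_Ico | exact MeasurableSet.univ)
        T ({ω | U 1 ω 0 ∈ Set.Ico (-1:ℝ) 0} ∪ {ω | U 1 ω 1 ∈ Set.Ico (-1:ℝ) 0})
        (le_antisymm (le_trans (measure_union_le _ _)
          (by rw [U_neg_null h 1 0, U_neg_null h 1 1, add_zero])) zero_le)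
        ?_]
      · rw [prodeval]
        simp only [Matrix.cons_val_zero, Matrix.cons_val_one, Matrix.head_cons]
        simp only [vol1, vol2, vol3, one_mul, mul_one]
        rw [← ENNReal.ofReal_mul (by positivity)]
        rw [show ((2:ℝ≥0∞))⁻¹ = ENNReal.ofReal 2⁻¹ by
          rw [ENNReal.ofReal_inv_of_pos (by norm_num)]; norm_num]
        rw [← ENNReal.ofReal_mul (by norm_num), ← ENNReal.ofReal_mul (by positivity)]
        congr 1
        ring
      · intro ω hω h0 h1
        simp only [Set.mem_union, Set.mem_setOf_eq, Set.mem_Ico, not_or, not_and, not_lt] at hω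
        obtain ⟨hω1, hω2⟩ := hω
        have hm := hSmem 1 ω
        rw [h0, h1] at hm
        simp only [Equiv.Perm.one_apply, hc0, hc1, Fin.val_zero, Fin.val_one, Nat.cast_zero,
          Nat.cast_one, neg_zero, sub_zero, Set.mem_Ico] at hm
        constructor
        · intro hx
          obtain ⟨⟨a1, a2⟩, a3, a4⟩ := (hm.1 hx).1
          refine ⟨⟨?_, ?_⟩, ?_, ?_⟩ <;>
            simp only [Matrix.cons_val_zero, Matrix.cons_val_one, Matrix.head_cons, Set.mem_Ico,
              Set.mem_univ] <;>
            first
            | trivial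
            | (constructor <;> linarith)
        · rintro ⟨⟨h00, h01⟩, h10, h11⟩
          simp only [Matrix.cons_val_zero, Matrix.cons_val_one, Matrix.head_cons, Set.mem_Ico,
            Set.mem_univ] at h10 h11
          apply hm.2
          refine ⟨⟨⟨?_, ?_⟩, ?_, ?_⟩, ?_⟩
          · linarith
          · linarith
          · linarith
          · linarith
          · rintro ⟨⟨e1, e2⟩, e3, e4⟩
            have := hω1 e1
            linarith
    have hp2 : μ (T ∩ (π 0 ⁻¹' {1} ∩ π 1 ⁻¹' {(Equiv.swap 0 1)})) = ENNReal.ofReal (δ/2) := by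
      rw [piece_prod h 1 (Equiv.swap 0 1)
        ![![(Set.univ : Set ℝ), Set.univ], ![Set.Ico (-1:ℝ) (2*δ), Set.Ico (0:ℝ) (1+2*δ)]]
        (by intro n' j'; fin_cases n' <;> fin_cases j' <;>
              simp only [Matrix.cons_val_zero, Matrix.cons_val_one, Matrix.head_cons] <;>
              first | exact measurableSet_Ico | exact MeasurableSet.univ)
        T {ω | U 1 ω 0 ∈ Set.Ico (-1:ℝ) 0}
        (U_neg_null h 1 0)
        ?_]
      · rw [prodeval]
        simp only [Matrix.cons_val_zero, Matrix.cons_val_one, Matrix.head_cons]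
        simp only [vol1, vol2, vol3, one_mul, mul_one]
        rw [show ((2:ℝ≥0∞))⁻¹ = ENNReal.ofReal 2⁻¹ by
          rw [ENNReal.ofReal_inv_of_pos (by norm_num)]; norm_num]
        rw [← ENNReal.ofReal_mul (by norm_num), ← ENNReal.ofReal_mul (by positivity)]
        congr 1
        ring
      · intro ω hω h0 h1
        simp only [Set.mem_setOf_eq, Set.mem_Ico, not_and, not_lt] at hω
        have hm := hSmem 1 ω
        rw [h0, h1] at hm
        simp only [Equiv.Perm.one_apply, hc0, hc1, Fin.val_zero, Fin.val_one, Nat.cast_zero,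
          Nat.cast_one, neg_zero, sub_zero, Set.mem_Ico] at hm
        constructor
        · intro hx
          obtain ⟨⟨a1, a2⟩, a3, a4⟩ := (hm.1 hx).1
          refine ⟨⟨?_, ?_⟩, ?_, ?_⟩ <;>
            simp only [Matrix.cons_val_zero, Matrix.cons_val_one, Matrix.head_cons, Set.mem_Ico,
              Set.mem_univ] <;>
            first
            | trivial
            | (constructor <;> linarith)
        · rintro ⟨⟨h00, h01⟩, h10, h11⟩
          simp only [Matrix.cons_val_zero, Matrix.cons_val_one, Matrix.head_cons, Set.mem_Ico,
            Set.mem_univ] at h10 h11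
          apply hm.2
          refine ⟨⟨⟨?_, ?_⟩, ?_, ?_⟩, ?_⟩
          · linarith
          · linarith
          · linarith
          · linarith
          · rintro ⟨⟨e1, e2⟩, e3, e4⟩
            have := hω e1
            linarith
    have hp3 : μ (T ∩ (π 0 ⁻¹' {(Equiv.swap 0 1)} ∩ π 1 ⁻¹' {1})) = ENNReal.ofReal (δ/2) := by
      rw [piece_prod h (Equiv.swap 0 1) 1
        ![![(Set.univ : Set ℝ), Set.univ], ![Set.Ico (0:ℝ) (1+2*δ), Set.Ico (-1:ℝ) (2*δ)]]
        (by intro n' j'; fin_cases n' <;> fin_cases j' <;>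
              simp only [Matrix.cons_val_zero, Matrix.cons_val_one, Matrix.head_cons] <;>
              first | exact measurableSet_Ico | exact MeasurableSet.univ)
        T {ω | U 1 ω 1 ∈ Set.Ico (-1:ℝ) 0}
        (U_neg_null h 1 1)
        ?_]
      · rw [prodeval]
        simp only [Matrix.cons_val_zero, Matrix.cons_val_one, Matrix.head_cons]
        simp only [vol1, vol2, vol3, one_mul, mul_one]
        rw [show ((2:ℝ≥0∞))⁻¹ = ENNReal.ofReal 2⁻¹ by
          rw [ENNReal.ofReal_inv_of_pos (by norm_num)]; norm_num]
        rw [← ENNReal.ofReal_mul (by norm_num), ← ENNReal.ofReal_mul (by positivity)]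
        congr 1
        ring
      · intro ω hω h0 h1
        simp only [Set.mem_setOf_eq, Set.mem_Ico, not_and, not_lt] at hω
        have hm := hSmem 1 ω
        rw [h0, h1] at hm
        simp only [Equiv.Perm.one_apply, hc0, hc1, Fin.val_zero, Fin.val_one, Nat.cast_zero,
          Nat.cast_one, neg_zero, sub_zero, Set.mem_Ico] at hm
        constructor
        · intro hx
          obtain ⟨⟨a1, a2⟩, a3, a4⟩ := (hm.1 hx).1
          refine ⟨⟨?_, ?_⟩, ?_, ?_⟩ <;>
            simp only [Matrix.cons_val_zero, Matrix.cons_val_one, Matrix.head_cons, Set.mem_Ico,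
              Set.mem_univ] <;>
            first
            | trivial
            | (constructor <;> linarith)
        · rintro ⟨⟨h00, h01⟩, h10, h11⟩
          simp only [Matrix.cons_val_zero, Matrix.cons_val_one, Matrix.head_cons, Set.mem_Ico,
            Set.mem_univ] at h10 h11
          apply hm.2
          refine ⟨⟨⟨?_, ?_⟩, ?_, ?_⟩, ?_⟩
          · linarith
          · linarith
          · linarith
          · linarith
          · rintro ⟨⟨e1, e2⟩, e3, e4⟩
            have := hω e3
            linarith
    rw [split4 h T, hz4, hp1, hp2, hp3, add_zero,
      ← ENNReal.ofReal_add (by positivity) (by positivity),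
      ← ENNReal.ofReal_add (by positivity) (by positivity)]
    congr 1
    ring
  have hInter : (⋂ j ∈ (Finset.univ : Finset (Fin 2)), {ω | X j ω ∈ S})
      = {ω | X 0 ω ∈ S} ∩ {ω | X 1 ω ∈ S} := by
    ext ω
    simp [Set.mem_iInter, Fin.forall_fin_two]
  have hterm : μ (⋂ j ∈ (Finset.univ : Finset (Fin 2)), {ω | X j ω ∈ S}) /
      (∏ j ∈ (Finset.univ : Finset (Fin 2)), μ {ω | X j ω ∈ S})
      = ENNReal.ofReal (2/(1+δ)^2) := by
    rw [hInter, hT, Fin.prod_univ_two, hT0, hT1,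
      ← ENNReal.ofReal_mul (by positivity), ← ENNReal.ofReal_div_of_pos (by positivity)]
    congr 1
    rw [div_eq_div_iff (by positivity) (by positivity)]
    ring
  rw [← hterm]
  refine le_trans (le_max_left _ (μ (⋂ j ∈ (Finset.univ : Finset (Fin 2)), {ω | X j ω ∉ S}) /
    ∏ j ∈ (Finset.univ : Finset (Fin 2)), μ {ω | X j ω ∉ S})) ?_
  rw [corrNum]
  exact le_iSup_of_le S (le_iSup_of_le hS (le_iSup_of_le Finset.univ
    (le_iSup_of_le Finset.univ_nonempty le_rfl)))

theorem two_le_corrNum (h : IsLHS μ 2 2 X π U) : (2 : ℝ≥0∞) ≤ corrNum μ (boxDiffs 2) X := by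
  refine le_of_forall_lt fun c hc => ?_
  have hc2 : c ≠ ⊤ := hc.ne_top
  have hr : c.toReal < 2 := by
    rw [← ENNReal.lt_ofReal_iff_toReal_lt hc2]
    have h2 : ENNReal.ofReal (2:ℝ) = (2:ℝ≥0∞) := by norm_num
    rw [h2]
    exact hc
  set r := c.toReal with hrdef
  have hr0 : 0 ≤ r := ENNReal.toReal_nonneg
  set δ := min (1/4 : ℝ) ((2 - r)/8) with hδ
  have hδ0 : 0 < δ := lt_min (by norm_num) (by linarith)
  have hδ1 : δ ≤ 1/4 := min_le_left _ _
  have hδ2 : δ ≤ (2-r)/8 := min_le_right _ _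
  have hrlt : r < 2/(1+δ)^2 := by
    rw [lt_div_iff₀ (by positivity)]
    nlinarith [sq_nonneg δ, mul_nonneg hr0 hδ0.le]
  refine lt_of_lt_of_le ?_ (main_est h δ hδ0 hδ1)
  rw [ENNReal.lt_ofReal_iff_toReal_lt hc2]
  exact hrlt

end Main

/-- For a Latin hypercube sample of `N = 2` points in `[0,1)^2`,
the `D^2_0`-correlation number is at least `2`. -/
theorem stmt0 {Ω : Type*} [MeasurableSpace Ω] (μ : Measure Ω) [IsProbabilityMeasure μ]
    (X : Fin 2 → Ω → Fin 2 → ℝ) (π : Fin 2 → Ω → Equiv.Perm (Fin 2))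
    (U : Fin 2 → Ω → Fin 2 → ℝ) (h : IsLHS μ 2 2 X π U) :
    (2 : ℝ≥0∞) ≤ corrNum μ (boxDiffs 2) X := by
  exact two_le_corrNum h

end LHSPaper
end

section
/- Let d ≥ 2, let (X_1, …, X_d) be a Latin hypercube sample of N = d points in [0,1)^d, let ε ∈ (0, 1/d), and set D = [0, (d−1)/d + ε)^d \ [0, (d−1)/d)^d. Let E be the event that for every i ∈ {0, …, d−1} there exists j ∈ {1, …, d} with π_j(i) = d−1, where π_1, …, π_d are the permutations used in the construction of the sample. Then P(X_i ∈ D | E) = dε for every i ∈ {1, …, d}, and P(X_1 ∈ D, …, X_d ∈ D | E) = (dε)^d. -/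
open MeasureTheory ProbabilityTheory Filter
open scoped ENNReal Classical

namespace LHSPaper

private lemma aemeasurable_pi_fin {Ω : Type*} [MeasurableSpace Ω] {μ : Measure Ω} {d : ℕ}
    {f : Ω → Fin d → ℝ} (h : ∀ j, AEMeasurable (fun ω => f ω j) μ) : AEMeasurable f μ := by
  refine ⟨fun ω j => (h j).mk _ ω, measurable_pi_lambda _ fun j => (h j).measurable_mk, ?_⟩
  filter_upwards [ae_all_iff.mpr fun j => (h j).ae_eq_mk] with ω hω
  funext j
  exact hω j

private lemma lhs_key {Ω : Type*} [MeasurableSpace Ω] (μ : Measure Ω) [IsProbabilityMeasure μ]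
    {d : ℕ} {π : Fin d → Ω → Equiv.Perm (Fin d)} {U : Fin d → Ω → Fin d → ℝ}
    (hind : iIndepFun (m := lhsMS d d) (lhsFun π U) μ)
    (haeπ : ∀ j, AEMeasurable (π j) μ)
    (hπ : ∀ j, Measure.map (π j) μ = (PMF.uniformOfFintype (Equiv.Perm (Fin d))).toMeasure)
    (haeU : ∀ n j, AEMeasurable (fun ω => U n ω j) μ)
    (hU : ∀ n j, Measure.map (fun ω => U n ω j) μ = volume.restrict (Set.Ico (0:ℝ) 1))
    {c : ℝ} (hc1 : c ≤ 1)
    (σ : Fin d → Equiv.Perm (Fin d)) (S : Finset (Fin d)) (jn : Fin d → Fin d) :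
    μ ({ω | ∀ j, π j ω = σ j} ∩ ⋂ n ∈ S, {ω | U n ω (jn n) ∈ Set.Ico (0:ℝ) c})
      = (↑(Fintype.card (Equiv.Perm (Fin d))) : ℝ≥0∞)⁻¹ ^ d * ENNReal.ofReal c ^ S.card := by
  classical
  set sets : ∀ i : Fin d ⊕ (Fin d × Fin d), Set (lhsβ d d i) :=
    fun i => match i with
      | .inl j => ({σ j} : Set (Equiv.Perm (Fin d)))
      | .inr p => (if p.1 ∈ S ∧ p.2 = jn p.1 then Set.Ico (0:ℝ) c else Set.univ : Set ℝ)
    with hsets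
  have hmeas : ∀ i ∈ Finset.univ, MeasurableSet[lhsMS d d i] (sets i) := by
    rintro (j | p) _
    · exact MeasurableSpace.measurableSet_top
    · show MeasurableSet (if p.1 ∈ S ∧ p.2 = jn p.1 then Set.Ico (0:ℝ) c else Set.univ)
      split
      · exact measurableSet_Ico
      · exact MeasurableSet.univ
  have key := hind.measure_inter_preimage_eq_mul Finset.univ hmeas
  have hset : (⋂ i ∈ Finset.univ, lhsFun π U i ⁻¹' sets i)
      = {ω | ∀ j, π j ω = σ j} ∩ ⋂ n ∈ S, {ω | U n ω (jn n) ∈ Set.Ico (0:ℝ) c} := by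
    ext ω
    simp only [Finset.mem_univ, Set.iInter_true, Set.mem_iInter, Set.mem_inter_iff,
      Set.mem_setOf_eq, Sum.forall, Prod.forall, Set.mem_preimage]
    constructor
    · rintro ⟨h1, h2⟩
      refine ⟨fun j => h1 j, ?_⟩
      intro n hn
      have := h2 n (jn n)
      simp [hsets, lhsFun, hn] at this
      exact this
    · rintro ⟨h1, h2⟩
      refine ⟨fun j => h1 j, ?_⟩
      intro n j
      by_cases hc : n ∈ S ∧ j = jn n
      · obtain ⟨hn, rfl⟩ := hc
        simp [hsets, lhsFun, hn]
        exact h2 n hn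
      · simp [hsets, lhsFun, hc]
        exact Set.mem_univ _
  have h1 : ∀ j : Fin d, μ (lhsFun π U (.inl j) ⁻¹' sets (.inl j))
      = (↑(Fintype.card (Equiv.Perm (Fin d))) : ℝ≥0∞)⁻¹ := by
    intro j
    have he : lhsFun π U (.inl j) ⁻¹' sets (.inl j) = (π j) ⁻¹' {σ j} := rfl
    rw [he, ← Measure.map_apply_of_aemeasurable (haeπ j) MeasurableSpace.measurableSet_top,
      hπ j, PMF.toMeasure_apply_singleton _ _ MeasurableSpace.measurableSet_top,
      PMF.uniformOfFintype_apply]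
  have h2 : ∀ p : Fin d × Fin d, μ (lhsFun π U (.inr p) ⁻¹' sets (.inr p))
      = if p.1 ∈ S ∧ p.2 = jn p.1 then ENNReal.ofReal c else 1 := by
    intro p
    by_cases hp : p.1 ∈ S ∧ p.2 = jn p.1
    · have he : lhsFun π U (.inr p) ⁻¹' sets (.inr p)
          = (fun ω => U p.1 ω p.2) ⁻¹' Set.Ico (0:ℝ) c := by
        simp [hsets, lhsFun, hp]
        exact rfl
      rw [he, ← Measure.map_apply_of_aemeasurable (haeU p.1 p.2) measurableSet_Ico, hU,
        Measure.restrict_apply measurableSet_Ico]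
      have hi : Set.Ico (0:ℝ) c ∩ Set.Ico 0 1 = Set.Ico 0 c := by
        rw [Set.Ico_inter_Ico]
        simp [min_eq_left hc1]
      rw [hi, Real.volume_Ico]
      simp [hp]
    · have he : lhsFun π U (.inr p) ⁻¹' sets (.inr p) = Set.univ := by
        simp [hsets, lhsFun, hp]
        exact Set.preimage_univ
      simp [he, hp]
  rw [hset] at key
  rw [key, Fintype.prod_sum_type]
  rw [Finset.prod_congr rfl (fun j _ => h1 j), Finset.prod_congr rfl (fun p _ => h2 p)]
  rw [Finset.prod_const, Finset.card_univ, Fintype.card_fin]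
  congr 1
  rw [Fintype.prod_prod_type]
  have h3 : ∀ n : Fin d, (∏ j : Fin d, if n ∈ S ∧ j = jn n then ENNReal.ofReal c else 1)
      = if n ∈ S then ENNReal.ofReal c else 1 := by
    intro n
    by_cases hn : n ∈ S
    · simp only [hn, true_and, if_true]
      rw [Finset.prod_ite_eq' Finset.univ (jn n) (fun _ => ENNReal.ofReal c)]
      simp
    · simp [hn]
  rw [Finset.prod_congr rfl (fun n _ => h3 n), Finset.prod_ite_mem, Finset.univ_inter,
    Finset.prod_const]

/-- Conditioned on the event `E` that every `i ∈ {0,…,d-1}` has some `j`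
with `π_j(i) = d-1`, each `P(X_i ∈ D | E) = dε` and `P(X_1,…,X_d ∈ D | E) = (dε)^d`. -/
theorem stmt4 {Ω : Type*} [MeasurableSpace Ω] (μ : Measure Ω) [IsProbabilityMeasure μ]
    (d : ℕ) (hd : 2 ≤ d)
    (X : Fin d → Ω → Fin d → ℝ) (π : Fin d → Ω → Equiv.Perm (Fin d))
    (U : Fin d → Ω → Fin d → ℝ) (h : IsLHS μ d d X π U)
    (ε : ℝ) (hε : ε ∈ Set.Ioo (0 : ℝ) (1 / (d : ℝ)))
    (D : Set (Fin d → ℝ))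
    (hD : D = anchoredBox (fun _ => ((d : ℝ) - 1) / d + ε) \
              anchoredBox (fun _ => ((d : ℝ) - 1) / d))
    (E : Set Ω)
    (hE : E = {ω | ∀ i : Fin d, ∃ j : Fin d, π j ω i = ⟨d - 1, by omega⟩}) :
    (∀ i, (μ[|E]) {ω | X i ω ∈ D} = ENNReal.ofReal (d * ε)) ∧
    (μ[|E]) {ω | ∀ n, X n ω ∈ D} = ENNReal.ofReal ((d * ε) ^ d) := by
  classical
  obtain ⟨hπ, hU, hind, hX⟩ := h
  set dl : Fin d := ⟨d - 1, by omega⟩ with hdl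
  have hd0 : (0:ℝ) < d := by
    have : 0 < d := by omega
    exact_mod_cast this
  have hde0 : (0:ℝ) < (d:ℝ) * ε := mul_pos hd0 hε.1
  have hde1 : (d:ℝ) * ε < 1 := by
    have h2 := hε.2
    rw [lt_div_iff₀ hd0] at h2
    linarith
  have haeπ : ∀ j, AEMeasurable (π j) μ := by
    intro j
    by_contra hc
    have h0 := hπ j
    rw [Measure.map_of_not_aemeasurable hc] at h0
    have h1 := congrArg (fun m : Measure (Equiv.Perm (Fin d)) => m Set.univ) h0
    simp [measure_univ] at h1
  have haeU : ∀ n j, AEMeasurable (fun ω => U n ω j) μ := by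
    intro n j
    by_contra hc
    have h0 := hU n j
    rw [Measure.map_of_not_aemeasurable hc] at h0
    have h1 := congrArg (fun m : Measure ℝ => m Set.univ) h0
    simp [Measure.restrict_apply_univ, Real.volume_Ico] at h1
  have hDmeas : MeasurableSet D := by
    have hbox : ∀ a : Fin d → ℝ, MeasurableSet (anchoredBox a) := by
      intro a
      have hb : anchoredBox a = ⋂ i, (fun x : Fin d → ℝ => x i) ⁻¹' Set.Ico 0 (a i) := by
        ext x; simp [anchoredBox]
      rw [hb]
      exact MeasurableSet.iInter fun i => (measurable_pi_apply i) measurableSet_Ico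
    rw [hD]
    exact (hbox _).diff (hbox _)
  have haeX : ∀ n, AEMeasurable (X n) μ := by
    intro n
    have hXeq : X n = fun ω j => ((((π j ω) n : ℕ) : ℝ) + U n ω j) / (d : ℝ) := by
      funext ω j; exact hX n j ω
    rw [hXeq]
    apply aemeasurable_pi_fin
    intro j
    have hg : Measurable (fun s : Equiv.Perm (Fin d) => ((s n : ℕ) : ℝ)) :=
      fun _ _ => MeasurableSpace.measurableSet_top
    exact ((hg.comp_aemeasurable (haeπ j)).add (haeU n j)).div_const _
  have hXDnull : ∀ n, NullMeasurableSet {ω | X n ω ∈ D} μ :=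
    fun n => (haeX n).nullMeasurable hDmeas
  set atom : (Fin d → Equiv.Perm (Fin d)) → Set Ω := fun σ => {ω | ∀ j, π j ω = σ j} with hatom
  have hatomnull : ∀ σ, NullMeasurableSet (atom σ) μ := by
    intro σ
    have ha : atom σ = ⋂ j, π j ⁻¹' {σ j} := by ext ω; simp [hatom]
    rw [ha]
    exact NullMeasurableSet.iInter fun j =>
      (haeπ j).nullMeasurable MeasurableSpace.measurableSet_top
  set G : Finset (Fin d → Equiv.Perm (Fin d)) :=
    Finset.univ.filter (fun σ => ∀ i, ∃ j, σ j i = dl) with hG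
  have hEuni : E = ⋃ σ ∈ G, atom σ := by
    rw [hE]
    ext ω
    simp only [Set.mem_setOf_eq, Set.mem_iUnion, hG, Finset.mem_filter, Finset.mem_univ,
      true_and, hatom, exists_prop]
    constructor
    · intro hω
      exact ⟨fun j => π j ω, fun i => hω i, fun j => rfl⟩
    · rintro ⟨σ, hσ, hωσ⟩ i
      obtain ⟨j, hj⟩ := hσ i
      exact ⟨j, by rw [hωσ j]; exact hj⟩
  set p : ℝ≥0∞ := (↑(Fintype.card (Equiv.Perm (Fin d))) : ℝ≥0∞)⁻¹ with hp
  set κ : ℝ≥0∞ := ENNReal.ofReal ((d:ℝ) * ε) with hκ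
  set Ugood : Set Ω := ⋂ n, ⋂ j, {ω | U n ω j ∈ Set.Ico (0:ℝ) 1} with hUg
  have hUgood_ae : ∀ᵐ ω ∂μ, ω ∈ Ugood := by
    have hcomp : Ugoodᶜ = ⋃ n, ⋃ j, ((fun ω => U n ω j) ⁻¹' (Set.Ico (0:ℝ) 1))ᶜ := by
      simp [hUg, Set.compl_iInter]
      rfl
    have hnull : μ Ugoodᶜ = 0 := by
      rw [hcomp]
      refine measure_iUnion_null fun n => measure_iUnion_null fun j => ?_
      have : ((fun ω => U n ω j) ⁻¹' (Set.Ico (0:ℝ) 1))ᶜ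
          = (fun ω => U n ω j) ⁻¹' (Set.Ico (0:ℝ) 1)ᶜ := by
        rw [Set.preimage_compl]
      rw [this, ← Measure.map_apply_of_aemeasurable (haeU n j) measurableSet_Ico.compl,
        hU n j, Measure.restrict_apply measurableSet_Ico.compl, Set.compl_inter_self,
        measure_empty]
    exact mem_ae_iff.mpr hnull
  have hmain : ∀ S : Finset (Fin d),
      μ (E ∩ ⋂ n ∈ S, {ω | X n ω ∈ D}) = (G.card : ℝ≥0∞) * (p ^ d * κ ^ S.card) := by
    intro S
    rw [hEuni, Set.iUnion₂_inter]
    rw [measure_biUnion_finset₀ ?disj ?nm]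
    case disj =>
      intro σ1 _ σ2 _ hne
      apply Disjoint.aedisjoint
      rw [Set.disjoint_left]
      rintro ω ⟨hω1, -⟩ ⟨hω2, -⟩
      exact hne (funext fun j => (hω1 j).symm.trans (hω2 j))
    case nm =>
      intro σ _
      exact (hatomnull σ).inter
        (NullMeasurableSet.iInter fun n => NullMeasurableSet.iInter fun _ => hXDnull n)
    have hperatom : ∀ σ ∈ G, μ (atom σ ∩ ⋂ n ∈ S, {ω | X n ω ∈ D}) = p ^ d * κ ^ S.card := by
      intro σ hσ
      have hsurj : Function.Surjective (fun j => (σ j).symm dl) := by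
        intro n
        obtain ⟨j, hj⟩ := (Finset.mem_filter.mp hσ).2 n
        exact ⟨j, by rw [← hj]; exact (σ j).symm_apply_apply n⟩
      have hinj : Function.Injective (fun j => (σ j).symm dl) :=
        Finite.injective_iff_surjective.mpr hsurj
      choose jn hjn using hsurj
      have hjn' : ∀ b, (σ (jn b)).symm dl = b := fun b => hjn b
      have hσ1 : ∀ n, σ (jn n) n = dl := fun n =>
        (((σ (jn n)).symm_apply_eq).mp (hjn' n)).symm
      have hσ2 : ∀ n j, σ j n = dl → j = jn n := by
        intro n j hj
        apply hinj
        show (σ j).symm dl = (σ (jn n)).symm dl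
        rw [hjn' n, ← hj, (σ j).symm_apply_apply]
      have hpt : ∀ ω, ω ∈ atom σ → ω ∈ Ugood → ∀ n,
          (X n ω ∈ D ↔ U n ω (jn n) ∈ Set.Ico (0:ℝ) ((d:ℝ)*ε)) := by
        intro ω hωa hωu n
        have hu : ∀ j, 0 ≤ U n ω j ∧ U n ω j < 1 := by
          intro j
          exact Set.mem_iInter.mp (Set.mem_iInter.mp hωu n) j
        have hXval : ∀ j, X n ω j = ((((σ j) n : ℕ) : ℝ) + U n ω j) / d := by
          intro j
          rw [hX n j ω, hωa j]
        have hcast : ((dl : ℕ) : ℝ) = (d:ℝ) - 1 := by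
          rw [show (dl : ℕ) = d - 1 from rfl, Nat.cast_sub (by omega : 1 ≤ d), Nat.cast_one]
        have hXjn : X n ω (jn n) = ((d:ℝ) - 1 + U n ω (jn n)) / d := by
          rw [hXval (jn n), hσ1 n, hcast]
        have hfs : ((d:ℝ)-1)/d + ε = (((d:ℝ)-1) + d*ε)/d := by
          field_simp
        rw [hD]
        simp only [Set.mem_diff, anchoredBox, Set.mem_setOf_eq, Set.mem_Ico]
        constructor
        · rintro ⟨hB, -⟩
          have h1 := (hB (jn n)).2
          rw [hXjn, hfs, div_lt_div_iff_of_pos_right hd0] at h1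
          exact ⟨(hu (jn n)).1, by linarith⟩
        · rintro ⟨hu0, hue⟩
          refine ⟨fun j => ⟨?_, ?_⟩, ?_⟩
          · rw [hXval j]
            exact div_nonneg (add_nonneg (Nat.cast_nonneg _) (hu j).1) hd0.le
          · by_cases hjj : j = jn n
            · subst hjj
              rw [hXjn, hfs, div_lt_div_iff_of_pos_right hd0]
              linarith
            · have hne : σ j n ≠ dl := fun hcon => hjj (hσ2 n j hcon)
              have h4 : ((σ j) n : ℕ) < d := ((σ j) n).isLt
              have h5 : ((σ j) n : ℕ) ≠ d - 1 := by
                intro hcon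
                exact hne (Fin.ext (by rw [hcon]))
              have h6 : (((σ j) n : ℕ) : ℝ) ≤ (d:ℝ) - 2 := by
                have h7 : ((σ j) n : ℕ) ≤ d - 2 := by omega
                calc (((σ j) n : ℕ) : ℝ) ≤ ((d - 2 : ℕ) : ℝ) := Nat.cast_le.mpr h7
                  _ = (d:ℝ) - 2 := by
                    rw [Nat.cast_sub (by omega : 2 ≤ d)]; norm_num
              rw [hXval j]
              have h8 : ((((σ j) n : ℕ) : ℝ) + U n ω j) / d < ((d:ℝ)-1)/d := by
                rw [div_lt_div_iff_of_pos_right hd0]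
                have := (hu j).2
                linarith
              have h9 : (0:ℝ) < ε := hε.1
              linarith
          · intro hcon
            have h8 := (hcon (jn n)).2
            rw [hXjn, div_lt_div_iff_of_pos_right hd0] at h8
            linarith
      have hAB : ((atom σ ∩ ⋂ n ∈ S, {ω | X n ω ∈ D} : Set Ω)) =ᵐ[μ]
          (({ω | ∀ j, π j ω = σ j} ∩
            ⋂ n ∈ S, {ω | U n ω (jn n) ∈ Set.Ico (0:ℝ) ((d:ℝ)*ε)} : Set Ω)) := by
        rw [Filter.eventuallyEq_set]
        filter_upwards [hUgood_ae] with ω hω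
        simp only [Set.mem_inter_iff, Set.mem_iInter, Set.mem_setOf_eq]
        constructor
        · rintro ⟨ha, hb⟩
          exact ⟨ha, fun n hn => (hpt ω ha hω n).mp (hb n hn)⟩
        · rintro ⟨ha, hb⟩
          exact ⟨ha, fun n hn => (hpt ω ha hω n).mpr (hb n hn)⟩
      rw [measure_congr hAB]
      exact lhs_key μ hind haeπ hπ haeU hU (le_of_lt hde1) σ S jn
    rw [Finset.sum_congr rfl hperatom, Finset.sum_const, nsmul_eq_mul]
  have hE' : μ E = (G.card : ℝ≥0∞) * p ^ d := by
    have h0 := hmain ∅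
    simpa using h0
  have hG0 : G.Nonempty := by
    refine ⟨fun j => Equiv.swap j dl, ?_⟩
    simp only [hG, Finset.mem_filter, Finset.mem_univ, true_and]
    intro i
    exact ⟨i, Equiv.swap_apply_left i dl⟩
  have hEne : μ E ≠ 0 := by
    rw [hE']
    apply mul_ne_zero
    · exact Nat.cast_ne_zero.mpr (Finset.card_ne_zero.mpr hG0)
    · exact pow_ne_zero _ (ENNReal.inv_ne_zero.mpr (ENNReal.natCast_ne_top _))
  have hEfin : μ E ≠ ⊤ := measure_ne_top μ E
  have hEnull : NullMeasurableSet E μ := by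
    rw [hEuni]
    exact NullMeasurableSet.biUnion (Set.to_countable _) fun σ _ => hatomnull σ
  have hcond : ∀ S : Finset (Fin d),
      (μ[|E]) (⋂ n ∈ S, {ω | X n ω ∈ D}) = κ ^ S.card := by
    intro S
    have happ : (μ[|E]) (⋂ n ∈ S, {ω | X n ω ∈ D})
        = (μ E)⁻¹ * μ ((⋂ n ∈ S, {ω | X n ω ∈ D}) ∩ E) := by
      rw [ProbabilityTheory.cond, Measure.smul_apply, Measure.restrict_apply₀' hEnull,
        smul_eq_mul]
    rw [happ, Set.inter_comm, hmain S,
      show (G.card : ℝ≥0∞) * (p ^ d * κ ^ S.card) = ((G.card : ℝ≥0∞) * p ^ d) * κ ^ S.card from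
        (mul_assoc _ _ _).symm,
      ← hE', ← mul_assoc, ENNReal.inv_mul_cancel hEne hEfin, one_mul]
  constructor
  · intro i
    have h0 := hcond {i}
    have hs : (⋂ n ∈ ({i} : Finset (Fin d)), {ω | X n ω ∈ D}) = {ω | X i ω ∈ D} := by
      simp
    rw [hs] at h0
    rw [h0]
    simp [hκ]
  · have h0 := hcond Finset.univ
    have hs : (⋂ n ∈ (Finset.univ : Finset (Fin d)), {ω | X n ω ∈ D})
        = {ω | ∀ n, X n ω ∈ D} := by
      ext ω; simp
    rw [hs] at h0
    rw [h0, Finset.card_univ, Fintype.card_fin, hκ]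
    exact (ENNReal.ofReal_pow hde0.le d).symm

end LHSPaper
end

section
/- Let d ≥ 2 be fixed, let (X_1, …, X_d) be a Latin hypercube sample of N = d points in [0,1)^d, and for ε ∈ (0, 1/d) set D(ε) = [0, (d−1)/d + ε)^d \ [0, (d−1)/d)^d. Then lim_{ε → 0+} P(X_1 ∈ D(ε), …, X_d ∈ D(ε)) / ∏_{i=1}^d P(X_i ∈ D(ε)) = (d!/d^d) · ((1 − 1/d)^d)^{1−d}. -/
open MeasureTheory ProbabilityTheory Filter
open scoped ENNReal Classical

namespace LHSPaper

section Aux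

set_option linter.unusedSectionVars false

variable {Ω : Type*} [MeasurableSpace Ω] {μ : Measure Ω} [IsProbabilityMeasure μ]
  {d : ℕ} {X : Fin d → Ω → Fin d → ℝ} {π : Fin d → Ω → Equiv.Perm (Fin d)}
  {U : Fin d → Ω → Fin d → ℝ}

lemma aemeas_pi (h : IsLHS μ d d X π U) (j : Fin d) : AEMeasurable (π j) μ := by
  by_contra hc
  have h0 := Measure.map_of_not_aemeasurable (μ := μ) hc
  rw [h.1 j] at h0
  have h1 : ((PMF.uniformOfFintype (Equiv.Perm (Fin d))).toMeasure) Set.univ = 1 := measure_univ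
  rw [h0] at h1
  simp at h1

lemma aemeas_U (h : IsLHS μ d d X π U) (n j : Fin d) :
    AEMeasurable (fun ω => U n ω j) μ := by
  by_contra hc
  have h0 := Measure.map_of_not_aemeasurable (μ := μ) hc
  rw [h.2.1 n j] at h0
  have h1 : (volume.restrict (Set.Ico (0:ℝ) 1)) Set.univ = ENNReal.ofReal 1 := by
    rw [Measure.restrict_apply_univ, Real.volume_Ico, sub_zero]
  rw [h0] at h1
  simp at h1

lemma meas_pi_set (h : IsLHS μ d d X π U) (j : Fin d) (S : Set (Equiv.Perm (Fin d))) :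
    μ ((π j) ⁻¹' S) =
      (Fintype.card S : ℝ≥0∞) / (Fintype.card (Equiv.Perm (Fin d)) : ℝ≥0∞) := by
  rw [← Measure.map_apply_of_aemeasurable (aemeas_pi h j)
      (MeasurableSpace.measurableSet_top), h.1 j,
    PMF.toMeasure_uniformOfFintype_apply S MeasurableSpace.measurableSet_top]

lemma card_fiber (a b : Fin d) :
    Fintype.card {v : Equiv.Perm (Fin d) // v a = b} * d =
      Fintype.card (Equiv.Perm (Fin d)) := by
  classical
  have hcongr : ∀ b' : Fin d, Fintype.card {v : Equiv.Perm (Fin d) // v a = b'} =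
      Fintype.card {v : Equiv.Perm (Fin d) // v a = b} := by
    intro b'
    refine Fintype.card_congr
      ⟨fun v => ⟨Equiv.swap b' b * v.1, by simp [v.2]⟩,
       fun v => ⟨Equiv.swap b' b * v.1, by simp [v.2]⟩, ?_, ?_⟩ <;>
      rintro ⟨v, hv⟩ <;>
      · apply Subtype.ext
        simp only []
        rw [← mul_assoc, Equiv.swap_mul_self, one_mul]
  have hsum : ∑ b' : Fin d, Fintype.card {v : Equiv.Perm (Fin d) // v a = b'} =
      Fintype.card (Equiv.Perm (Fin d)) := by
    rw [← Fintype.card_sigma]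
    exact Fintype.card_congr (Equiv.sigmaFiberEquiv fun v : Equiv.Perm (Fin d) => v a)
  rw [Finset.sum_congr rfl (fun b' _ => hcongr b')] at hsum
  simpa [Finset.sum_const, Finset.card_univ, mul_comm] using hsum

lemma meas_pi_fiber (h : IsLHS μ d d X π U) (hd : 0 < d) (j a b : Fin d) :
    μ ((π j) ⁻¹' {v : Equiv.Perm (Fin d) | v a = b}) = (d : ℝ≥0∞)⁻¹ := by
  classical
  rw [meas_pi_set h j _]
  have hcard : ∀ (inst : Fintype ↑{v : Equiv.Perm (Fin d) | v a = b}),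
      @Fintype.card _ inst = Fintype.card {v : Equiv.Perm (Fin d) // v a = b} :=
    fun inst => @Fintype.card_congr _ _ inst _ (Equiv.refl _)
  rw [hcard]
  have hc := card_fiber (d := d) a b
  have hcE : (Fintype.card {v : Equiv.Perm (Fin d) // v a = b} : ℝ≥0∞) * d =
      (Fintype.card (Equiv.Perm (Fin d)) : ℝ≥0∞) := by exact_mod_cast hc
  have hne0 : (Fintype.card {v : Equiv.Perm (Fin d) // v a = b} : ℝ≥0∞) ≠ 0 := by
    have : 0 < Fintype.card {v : Equiv.Perm (Fin d) // v a = b} :=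
      Fintype.card_pos_iff.mpr ⟨⟨Equiv.swap a b, Equiv.swap_apply_left a b⟩⟩
    exact_mod_cast this.ne'
  have hnetop : (Fintype.card {v : Equiv.Perm (Fin d) // v a = b} : ℝ≥0∞) ≠ ⊤ :=
    ENNReal.natCast_ne_top _
  rw [← hcE, div_eq_mul_inv, ENNReal.mul_inv (Or.inl hne0) (Or.inl hnetop), ← mul_assoc,
    ENNReal.mul_inv_cancel hne0 hnetop, one_mul]

lemma meas_U_set (h : IsLHS μ d d X π U) (n j : Fin d) {T : Set ℝ}
    (hT : MeasurableSet T) :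
    μ ((fun ω => U n ω j) ⁻¹' T) = volume (T ∩ Set.Ico 0 1) := by
  rw [← Measure.map_apply_of_aemeasurable (aemeas_U h n j) hT, h.2.1 n j,
    Measure.restrict_apply hT]

lemma ae_G (h : IsLHS μ d d X π U) : ∀ᵐ ω ∂μ, ∀ n j, U n ω j ∈ Set.Ico (0:ℝ) 1 := by
  rw [ae_all_iff]
  intro n
  rw [ae_all_iff]
  intro j
  have h0 : μ ((fun ω => U n ω j) ⁻¹' (Set.Ico (0:ℝ) 1)ᶜ) = 0 := by
    rw [meas_U_set h n j measurableSet_Ico.compl]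
    simp
  exact ae_iff.2 h0

/-- The sets used in the independence argument. -/
def setsFun {d : ℕ} (Sp : Fin d → Set (Equiv.Perm (Fin d))) (T : Fin d → Set ℝ) :
    ∀ i : Fin d ⊕ (Fin d × Fin d), Set (lhsβ d d i)
  | .inl j => Sp j
  | .inr p => T p.2

lemma master (h : IsLHS μ d d X π U) (Sp : Fin d → Set (Equiv.Perm (Fin d)))
    (nf : Fin d → Fin d) (T : Fin d → Set ℝ) (hT : ∀ j, MeasurableSet (T j)) :
    μ ((⋂ j, (π j) ⁻¹' (Sp j)) ∩ ⋂ j, (fun ω => U (nf j) ω j) ⁻¹' (T j)) =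
      (∏ j, μ ((π j) ⁻¹' (Sp j))) * ∏ j, μ ((fun ω => U (nf j) ω j) ⁻¹' (T j)) := by
  classical
  set S1 : Finset (Fin d ⊕ (Fin d × Fin d)) := Finset.univ.image Sum.inl with hS1
  set S2 : Finset (Fin d ⊕ (Fin d × Fin d)) :=
    Finset.univ.image (fun j => Sum.inr (nf j, j)) with hS2
  have hmeas : ∀ i ∈ S1 ∪ S2, MeasurableSet[lhsMS d d i] (setsFun Sp T i) := by
    rintro (j | p) _
    · exact MeasurableSpace.measurableSet_top
    · exact hT p.2
  have key := h.2.2.1.measure_inter_preimage_eq_mul (S1 ∪ S2) hmeas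
  have hinj2 : Function.Injective (fun j : Fin d => (Sum.inr (nf j, j) :
      Fin d ⊕ (Fin d × Fin d))) := by
    intro a b hab
    simpa using congrArg (fun x => Sum.elim (fun _ => a) Prod.snd x) hab
  have hdisj : Disjoint S1 S2 := by
    rw [Finset.disjoint_left]
    rintro x hx1 hx2
    rw [hS1, Finset.mem_image] at hx1
    rw [hS2, Finset.mem_image] at hx2
    obtain ⟨a, -, rfl⟩ := hx1
    obtain ⟨b, -, hb⟩ := hx2
    exact Sum.inl_ne_inr hb.symm
  have hL : (⋂ i ∈ S1 ∪ S2, lhsFun π U i ⁻¹' setsFun Sp T i) =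
      (⋂ j, (π j) ⁻¹' (Sp j)) ∩ ⋂ j, (fun ω => U (nf j) ω j) ⁻¹' (T j) := by
    rw [Finset.set_biInter_inter, hS1, hS2, Finset.set_biInter_finset_image,
      Finset.set_biInter_finset_image]
    congr 1
    · simp only [Finset.mem_univ, Set.iInter_true]
      rfl
    · simp only [Finset.mem_univ, Set.iInter_true]
      rfl
  have hR : (∏ i ∈ S1 ∪ S2, μ (lhsFun π U i ⁻¹' setsFun Sp T i)) =
      (∏ j, μ ((π j) ⁻¹' (Sp j))) * ∏ j, μ ((fun ω => U (nf j) ω j) ⁻¹' (T j)) := by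
    rw [Finset.prod_union hdisj, hS1, hS2,
      Finset.prod_image (fun a _ b _ hab => Sum.inl_injective hab),
      Finset.prod_image (fun a _ b _ hab => hinj2 hab)]
    rfl
  rw [hL] at key
  rw [key, hR]

lemma cell_measure (h : IsLHS μ d d X π U) (hd : 0 < d)
    (ppos pval nf : Fin d → Fin d) (T : Fin d → Set ℝ)
    (hT : ∀ j, MeasurableSet (T j)) :
    μ ((⋂ j, (π j) ⁻¹' {v : Equiv.Perm (Fin d) | v (ppos j) = pval j}) ∩
        ⋂ j, (fun ω => U (nf j) ω j) ⁻¹' (T j)) =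
      ∏ j, ((d : ℝ≥0∞)⁻¹ * volume (T j ∩ Set.Ico 0 1)) := by
  rw [master h _ nf T hT, Finset.prod_mul_distrib]
  congr 1
  · exact Finset.prod_congr rfl fun j _ => meas_pi_fiber h hd j _ _
  · exact Finset.prod_congr rfl fun j _ => meas_U_set h (nf j) j (hT j)

lemma aemeas_X (h : IsLHS μ d d X π U) (n j : Fin d) :
    AEMeasurable (fun ω => X n ω j) μ := by
  have h1 : AEMeasurable (fun ω => ((π j ω n : ℕ) : ℝ)) μ :=
    (measurable_from_top (f := fun v : Equiv.Perm (Fin d) => ((v n : ℕ) : ℝ))).comp_aemeasurable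
      (aemeas_pi h j)
  have h2 := aemeas_U h n j
  have h3 : AEMeasurable (fun ω => (((π j ω n : ℕ) : ℝ) + U n ω j) / d) μ :=
    (h1.add h2).div_const _
  have he : (fun ω => X n ω j) = fun ω => (((π j ω n : ℕ) : ℝ) + U n ω j) / d :=
    funext fun ω => h.2.2.2 n j ω
  rw [he]
  exact h3

lemma nm_box (h : IsLHS μ d d X π U) (i : Fin d) (a : ℝ) :
    NullMeasurableSet {ω | ∀ j, X i ω j ∈ Set.Ico (0:ℝ) a} μ := by
  have he : {ω | ∀ j, X i ω j ∈ Set.Ico (0:ℝ) a} =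
      ⋂ j, (fun ω => X i ω j) ⁻¹' Set.Ico (0:ℝ) a := by
    ext ω; simp [Set.mem_iInter]
  rw [he]
  exact NullMeasurableSet.iInter fun j =>
    (aemeas_X h i j).nullMeasurableSet_preimage measurableSet_Ico

lemma single_prob (h : IsLHS μ d d X π U) (hd : 0 < d) (i : Fin d) (m : ℕ) (hm : m < d)
    (r : ℝ) (hr0 : 0 ≤ r) (hr1 : r < 1) :
    μ {ω | ∀ j, X i ω j ∈ Set.Ico (0:ℝ) (((m:ℝ) + r)/d)} =
      ENNReal.ofReal (((m:ℝ) + r)/d) ^ d := by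
  classical
  have hdR : (0:ℝ) < d := by exact_mod_cast hd
  set I : ℕ → Set ℝ :=
    fun k => if k < m then Set.Ico 0 1 else if k = m then Set.Ico 0 r else ∅ with hIdef
  have hImeas : ∀ k, MeasurableSet (I k) := by
    intro k
    simp only [hIdef]
    split_ifs
    exacts [measurableSet_Ico, measurableSet_Ico, MeasurableSet.empty]
  set Cell : (Fin d → Fin d) → Set Ω := fun t =>
    (⋂ j, (π j) ⁻¹' {v : Equiv.Perm (Fin d) | v i = t j}) ∩
      ⋂ j, (fun ω => U i ω j) ⁻¹' (I (t j)) with hCell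
  have coord : ∀ (k : Fin d) (u : ℝ), u ∈ Set.Ico (0:ℝ) 1 →
      ((((k : ℕ) : ℝ) + u)/d ∈ Set.Ico (0:ℝ) (((m:ℝ) + r)/d) ↔ u ∈ I (k : ℕ)) := by
    rintro k u ⟨hu0, hu1⟩
    constructor
    · rintro ⟨-, hlt⟩
      rw [div_lt_div_iff_of_pos_right hdR] at hlt
      simp only [hIdef]
      by_cases h1 : (k : ℕ) < m
      · rw [if_pos h1]
        exact ⟨hu0, hu1⟩
      · by_cases h2 : (k : ℕ) = m
        · have hkm : ((k : ℕ) : ℝ) = m := by exact_mod_cast h2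
          rw [if_neg h1, if_pos h2]
          exact ⟨hu0, by linarith⟩
        · exfalso
          have hmk : m + 1 ≤ (k : ℕ) := by omega
          have : (m : ℝ) + 1 ≤ ((k : ℕ) : ℝ) := by exact_mod_cast hmk
          linarith
    · intro hu'
      refine ⟨by positivity, ?_⟩
      rw [div_lt_div_iff_of_pos_right hdR]
      simp only [hIdef] at hu'
      by_cases h1 : (k : ℕ) < m
      · have : ((k : ℕ) : ℝ) + 1 ≤ m := by exact_mod_cast h1
        linarith
      · by_cases h2 : (k : ℕ) = m
        · have hkm : ((k : ℕ) : ℝ) = m := by exact_mod_cast h2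
          rw [if_neg h1, if_pos h2] at hu'
          have := hu'.2
          linarith
        · rw [if_neg h1, if_neg h2] at hu'
          exact absurd hu' (Set.notMem_empty u)
  have hae : {ω | ∀ j, X i ω j ∈ Set.Ico (0:ℝ) (((m:ℝ) + r)/d)} =ᵐ[μ]
      ⋃ t : Fin d → Fin d, Cell t := by
    filter_upwards [ae_G h] with ω hG
    have hX : ∀ j, X i ω j = (((π j ω i : ℕ) : ℝ) + U i ω j)/d := fun j => h.2.2.2 i j ω
    rw [eq_iff_iff]
    constructor
    · intro hx
      have hx' : ∀ j, X i ω j ∈ Set.Ico (0:ℝ) (((m:ℝ) + r)/d) := hx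
      refine Set.mem_iUnion.2 ⟨(fun j => π j ω i : Fin d → Fin d), ?_⟩
      refine Set.mem_inter (Set.mem_iInter.2 fun j => rfl) (Set.mem_iInter.2 fun j => ?_)
      exact (coord _ _ (hG i j)).1 (by rw [← hX j]; exact hx' j)
    · intro hx
      obtain ⟨t, ht⟩ := Set.mem_iUnion.1 hx
      obtain ⟨h1, h2⟩ := ht
      show ∀ j, X i ω j ∈ Set.Ico (0:ℝ) (((m:ℝ) + r)/d)
      intro j
      have e1 : π j ω i = t j := Set.mem_iInter.1 h1 j
      have e2 : U i ω j ∈ I ((t j : ℕ)) := Set.mem_iInter.1 h2 j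
      rw [hX j, e1]
      exact (coord _ _ (hG i j)).2 e2
  rw [measure_congr hae]
  have hnm : ∀ t : Fin d → Fin d, NullMeasurableSet (Cell t) μ := by
    intro t
    refine NullMeasurableSet.inter (NullMeasurableSet.iInter fun j => ?_)
      (NullMeasurableSet.iInter fun j => ?_)
    · exact (aemeas_pi h j).nullMeasurableSet_preimage MeasurableSpace.measurableSet_top
    · exact (aemeas_U h i j).nullMeasurableSet_preimage (hImeas _)
  have hdis : Pairwise (Function.onFun (AEDisjoint μ) Cell) := by
    intro t t' htt'
    apply Disjoint.aedisjoint
    rw [Set.disjoint_left]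
    rintro ω ⟨h1, -⟩ ⟨h2, -⟩
    apply htt'
    funext j
    have e1 : π j ω i = t j := Set.mem_iInter.1 h1 j
    have e2 : π j ω i = t' j := Set.mem_iInter.1 h2 j
    rw [← e1, e2]
  rw [measure_iUnion₀ hdis hnm, tsum_fintype]
  have hcell : ∀ t : Fin d → Fin d,
      μ (Cell t) = ∏ j, ((d : ℝ≥0∞)⁻¹ * volume (I ((t j : ℕ)) ∩ Set.Ico 0 1)) := by
    intro t
    rw [hCell]
    exact cell_measure h hd (fun _ => i) t (fun _ => i) (fun j => I ((t j : ℕ)))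
      (fun j => hImeas _)
  rw [Finset.sum_congr rfl fun t _ => hcell t]
  have hswap := Finset.prod_univ_sum (fun _ : Fin d => (Finset.univ : Finset (Fin d)))
    (fun j k => (d : ℝ≥0∞)⁻¹ * volume (I ((k : Fin d) : ℕ) ∩ Set.Ico 0 1))
  rw [Fintype.piFinset_univ] at hswap
  rw [← hswap]
  have hvol : ∀ k : ℕ, volume (I k ∩ Set.Ico (0:ℝ) 1) =
      (if k < m then 1 else if k = m then ENNReal.ofReal r else 0) := by
    intro k
    simp only [hIdef]
    split_ifs with h1 h2
    · simp only [Set.inter_self]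
      rw [Real.volume_Ico]
      norm_num
    · rw [Set.Ico_inter_Ico, max_self, min_eq_left hr1.le, Real.volume_Ico, sub_zero]
    · simp
  have hsum : ∀ j : Fin d, ∑ k : Fin d, ((d : ℝ≥0∞)⁻¹ * volume (I (k : ℕ) ∩ Set.Ico 0 1)) =
      (d : ℝ≥0∞)⁻¹ * ((m : ℝ≥0∞) + ENNReal.ofReal r) := by
    intro j
    rw [← Finset.mul_sum]
    congr 1
    have hrw : ∀ k : Fin d, volume (I (k : ℕ) ∩ Set.Ico (0:ℝ) 1) =
        (fun k' : ℕ => if k' < m then 1 else if k' = m then ENNReal.ofReal r else 0) (k : ℕ) :=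
      fun k => hvol _
    rw [Finset.sum_congr rfl fun k _ => hrw k,
      Fin.sum_univ_eq_sum_range
        (fun k' : ℕ => if k' < m then (1:ℝ≥0∞) else if k' = m then ENNReal.ofReal r else 0) d]
    have hsplit : ∀ k ∈ Finset.range d,
        (if k < m then (1:ℝ≥0∞) else if k = m then ENNReal.ofReal r else 0) =
          (if k < m then (1:ℝ≥0∞) else 0) + (if k = m then ENNReal.ofReal r else 0) := by
      intro k _
      rcases Nat.lt_trichotomy k m with hk | hk | hk
      · simp [hk, Nat.ne_of_lt hk]
      · simp [hk]
      · have h1 : ¬ k < m := by omega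
        have h2 : k ≠ m := by omega
        simp [h1, h2]
    rw [Finset.sum_congr rfl hsplit, Finset.sum_add_distrib]
    congr 1
    · rw [Finset.sum_ite, Finset.sum_const, Finset.sum_const_zero, add_zero]
      have : (Finset.range d).filter (fun k => k < m) = Finset.range m := by
        ext k
        simp only [Finset.mem_filter, Finset.mem_range]
        omega
      rw [this, Finset.card_range]
      simp
    · rw [Finset.sum_ite_eq' (Finset.range d) m
        (fun _ => ENNReal.ofReal r)]
      simp [Finset.mem_range, hm]
  rw [Finset.prod_congr rfl fun j _ => hsum j, Finset.prod_const, Finset.card_univ,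
    Fintype.card_fin]
  have hconv : (d : ℝ≥0∞)⁻¹ * ((m : ℝ≥0∞) + ENNReal.ofReal r) =
      ENNReal.ofReal (((m:ℝ) + r)/d) := by
    rw [ENNReal.ofReal_div_of_pos hdR, ENNReal.ofReal_add (Nat.cast_nonneg m) hr0,
      ENNReal.ofReal_natCast, ENNReal.ofReal_natCast, ENNReal.div_eq_inv_mul]
  rw [hconv]

lemma joint_prob (h : IsLHS μ d d X π U) (hd2 : 2 ≤ d) {ε : ℝ} (hε : 0 < ε)
    (hεd : (d:ℝ)*ε < 1) {Dε : Set (Fin d → ℝ)}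
    (hD : Dε = anchoredBox (fun _ => ((d:ℝ) - 1)/d + ε) \
        anchoredBox (fun _ => ((d:ℝ) - 1)/d)) :
    μ {ω | ∀ n, X n ω ∈ Dε} = (d.factorial : ℝ≥0∞) * ENNReal.ofReal ε ^ d := by
  classical
  have hd : 0 < d := by omega
  have hdR : (0:ℝ) < d := by exact_mod_cast hd
  set c : ℝ := ((d:ℝ) - 1)/d with hc
  set top : Fin d := ⟨d - 1, by omega⟩ with htop
  have htopR : ((top : ℕ) : ℝ) = (d:ℝ) - 1 := by
    show (((d - 1 : ℕ)) : ℝ) = (d:ℝ) - 1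
    rw [Nat.cast_sub (by omega : 1 ≤ d), Nat.cast_one]
  have hcd : (c + ε) * d = ((d:ℝ) - 1) + d*ε := by
    rw [hc]
    field_simp
  set Cell : Equiv.Perm (Fin d) → Set Ω := fun σ =>
    (⋂ j, (π j) ⁻¹' {v : Equiv.Perm (Fin d) | v (σ j) = top}) ∩
      ⋂ j, (fun ω => U (σ j) ω j) ⁻¹' (Set.Ico 0 ((d:ℝ)*ε)) with hCell
  have hae : {ω | ∀ n, X n ω ∈ Dε} =ᵐ[μ] ⋃ σ : Equiv.Perm (Fin d), Cell σ := by
    filter_upwards [ae_G h] with ω hG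
    have hX : ∀ n j, X n ω j = (((π j ω n : ℕ) : ℝ) + U n ω j)/d :=
      fun n j => h.2.2.2 n j ω
    have hXlow : ∀ n j, (0:ℝ) ≤ X n ω j := by
      intro n j
      have := (hG n j).1
      rw [hX]
      positivity
    have hlow : ∀ n j, π j ω n ≠ top → X n ω j < c := by
      intro n j hne
      have hval : (π j ω n : ℕ) + 1 ≤ d - 1 := by
        have h1 : (π j ω n : ℕ) < d := (π j ω n).2
        have h2 : (π j ω n : ℕ) ≠ d - 1 := by
          intro hco
          exact hne (Fin.ext (by rw [hco]))
        omega
      have hcast : ((π j ω n : ℕ) : ℝ) + 1 ≤ (d:ℝ) - 1 := by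
        have h3 : ((((π j ω n : ℕ)) + 1 : ℕ) : ℝ) ≤ (((d - 1 : ℕ)) : ℝ) := by
          exact_mod_cast hval
        push_cast [Nat.cast_sub (by omega : 1 ≤ d)] at h3
        linarith
      rw [hX n j, hc, div_lt_div_iff_of_pos_right hdR]
      have := (hG n j).2
      linarith
    have hhigh : ∀ n j, π j ω n = top → c ≤ X n ω j := by
      intro n j hj
      rw [hX n j, hc, div_le_div_iff_of_pos_right hdR]
      rw [hj, htopR]
      have := (hG n j).1
      linarith
    have hmemD : ∀ n, X n ω ∈ Dε ↔
        ((∀ j, X n ω j < c + ε) ∧ ∃ j, π j ω n = top) := by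
      intro n
      rw [hD]
      simp only [Set.mem_diff, anchoredBox, Set.mem_setOf_eq, Set.mem_Ico]
      constructor
      · rintro ⟨hbig, hnsmall⟩
        refine ⟨fun j => (hbig j).2, ?_⟩
        push_neg at hnsmall
        obtain ⟨j, hj⟩ := hnsmall
        have hge : c ≤ X n ω j := by
          by_contra hlt
          exact absurd (hj (hXlow n j)) (not_le.2 (not_le.1 hlt))
        refine ⟨j, ?_⟩
        by_contra hne
        exact absurd hge (not_le.2 (hlow n j hne))
      · rintro ⟨hup, j, hj⟩
        refine ⟨fun j' => ⟨hXlow n j', hup j'⟩, ?_⟩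
        intro hsmall
        exact absurd (hsmall j).2 (not_lt.2 (hhigh n j hj))
    rw [eq_iff_iff]
    constructor
    · intro hall'
      have hall : ∀ n, X n ω ∈ Dε := hall'
      set f : Fin d → Fin d := fun j => (π j ω).symm top with hf
      have hsurj : Function.Surjective f := by
        intro n
        obtain ⟨-, j, hj⟩ := (hmemD n).1 (hall n)
        refine ⟨j, ?_⟩
        show (π j ω).symm top = n
        rw [← hj, Equiv.symm_apply_apply]
      have hbij := hsurj.bijective_of_finite
      refine Set.mem_iUnion.2 ⟨Equiv.ofBijective f hbij,
        Set.mem_inter (Set.mem_iInter.2 fun j => ?_) (Set.mem_iInter.2 fun j => ?_)⟩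
      · show π j ω (f j) = top
        exact Equiv.apply_symm_apply _ _
      · show U (f j) ω j ∈ Set.Ico (0:ℝ) ((d:ℝ)*ε)
        have hπ : π j ω (f j) = top := Equiv.apply_symm_apply _ _
        have hup := ((hmemD (f j)).1 (hall (f j))).1 j
        rw [hX (f j) j, hπ, htopR] at hup
        refine ⟨(hG (f j) j).1, ?_⟩
        rw [div_lt_iff₀ hdR] at hup
        linarith
    · intro hx
      obtain ⟨σ, hmem⟩ := Set.mem_iUnion.1 hx
      obtain ⟨h1, h2⟩ := hmem
      show ∀ n, X n ω ∈ Dε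
      intro n
      have hπ : ∀ j, π j ω (σ j) = top := fun j => Set.mem_iInter.1 h1 j
      have hU : ∀ j, U (σ j) ω j ∈ Set.Ico (0:ℝ) ((d:ℝ)*ε) :=
        fun j => Set.mem_iInter.1 h2 j
      rw [hmemD n]
      constructor
      · intro j
        by_cases hcase : π j ω n = top
        · have hn : n = σ j := (π j ω).injective (by rw [hcase, hπ j])
          rw [hX n j, hcase, htopR, div_lt_iff₀ hdR]
          have h3 := (hU j).2
          rw [← hn] at h3
          linarith
        · have h4 := hlow n j hcase
          linarith
      · refine ⟨σ.symm n, ?_⟩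
        have := hπ (σ.symm n)
        rwa [Equiv.apply_symm_apply] at this
  rw [measure_congr hae]
  have hnm : ∀ σ : Equiv.Perm (Fin d), NullMeasurableSet (Cell σ) μ := by
    intro σ
    refine NullMeasurableSet.inter (NullMeasurableSet.iInter fun j => ?_)
      (NullMeasurableSet.iInter fun j => ?_)
    · exact (aemeas_pi h j).nullMeasurableSet_preimage MeasurableSpace.measurableSet_top
    · exact (aemeas_U h (σ j) j).nullMeasurableSet_preimage measurableSet_Ico
  have hdis : Pairwise (Function.onFun (AEDisjoint μ) Cell) := by
    intro σ σ' hne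
    apply Disjoint.aedisjoint
    rw [Set.disjoint_left]
    rintro ω ⟨h1, -⟩ ⟨h2, -⟩
    apply hne
    apply Equiv.ext
    intro j
    have e1 : π j ω (σ j) = top := Set.mem_iInter.1 h1 j
    have e2 : π j ω (σ' j) = top := Set.mem_iInter.1 h2 j
    exact (π j ω).injective (e1.trans e2.symm)
  rw [measure_iUnion₀ hdis hnm, tsum_fintype]
  have hone : ∀ σ : Equiv.Perm (Fin d), μ (Cell σ) = (ENNReal.ofReal ε)^d := by
    intro σ
    rw [hCell]
    rw [cell_measure h hd (fun j => σ j) (fun _ => top) (fun j => σ j)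
      (fun _ => Set.Ico 0 ((d:ℝ)*ε)) (fun _ => measurableSet_Ico)]
    have hint : Set.Ico (0:ℝ) ((d:ℝ)*ε) ∩ Set.Ico 0 1 = Set.Ico 0 ((d:ℝ)*ε) := by
      rw [Set.Ico_inter_Ico, max_self, min_eq_left hεd.le]
    rw [Finset.prod_congr rfl fun j _ => by rw [hint, Real.volume_Ico, sub_zero]]
    rw [Finset.prod_const, Finset.card_univ, Fintype.card_fin]
    have hmul : (d : ℝ≥0∞)⁻¹ * ENNReal.ofReal ((d:ℝ)*ε) = ENNReal.ofReal ε := by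
      rw [← ENNReal.ofReal_natCast d, ← ENNReal.ofReal_inv_of_pos hdR,
        ← ENNReal.ofReal_mul (by positivity)]
      congr 1
      field_simp
    rw [hmul]
  rw [Finset.sum_congr rfl fun σ _ => hone σ, Finset.sum_const, Finset.card_univ,
    Fintype.card_perm, Fintype.card_fin, nsmul_eq_mul]

lemma single_D (h : IsLHS μ d d X π U) (hd2 : 2 ≤ d) {ε : ℝ} (hε : 0 < ε)
    (hεd : (d:ℝ)*ε < 1) {Dε : Set (Fin d → ℝ)}
    (hD : Dε = anchoredBox (fun _ => ((d:ℝ) - 1)/d + ε) \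
        anchoredBox (fun _ => ((d:ℝ) - 1)/d)) (i : Fin d) :
    (μ {ω | X i ω ∈ Dε}).toReal = (((d:ℝ) - 1)/d + ε)^d - (((d:ℝ) - 1)/d)^d := by
  have hd : 0 < d := by omega
  have hdR : (0:ℝ) < d := by exact_mod_cast hd
  have e1 : (((d - 1 : ℕ):ℝ) + (d:ℝ)*ε)/d = ((d:ℝ) - 1)/d + ε := by
    rw [Nat.cast_sub (by omega : 1 ≤ d), Nat.cast_one]
    field_simp
  have e2 : (((d - 1 : ℕ):ℝ) + 0)/d = ((d:ℝ) - 1)/d := by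
    rw [Nat.cast_sub (by omega : 1 ≤ d), Nat.cast_one, add_zero]
  have hsplit : {ω | X i ω ∈ Dε} =
      {ω | ∀ j, X i ω j ∈ Set.Ico (0:ℝ) ((((d - 1 : ℕ):ℝ) + (d:ℝ)*ε)/d)} \
        {ω | ∀ j, X i ω j ∈ Set.Ico (0:ℝ) ((((d - 1 : ℕ):ℝ) + 0)/d)} := by
    rw [hD]
    ext ω
    simp only [Set.mem_setOf_eq, Set.mem_diff, anchoredBox, e1, e2]
  rw [hsplit]
  have hble : (((d - 1 : ℕ):ℝ) + 0)/d ≤ (((d - 1 : ℕ):ℝ) + (d:ℝ)*ε)/d := by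
    rw [e1, e2]
    linarith
  have hsub : {ω | ∀ j, X i ω j ∈ Set.Ico (0:ℝ) ((((d - 1 : ℕ):ℝ) + 0)/d)} ⊆
      {ω | ∀ j, X i ω j ∈ Set.Ico (0:ℝ) ((((d - 1 : ℕ):ℝ) + (d:ℝ)*ε)/d)} := by
    intro ω hω j
    exact Set.Ico_subset_Ico_right hble (hω j)
  rw [measure_diff hsub (nm_box h i _) (measure_ne_top μ _),
    ENNReal.toReal_sub_of_le (measure_mono hsub) (measure_ne_top μ _),
    single_prob h hd i (d-1) (by omega) ((d:ℝ)*ε) (by positivity) hεd,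
    single_prob h hd i (d-1) (by omega) 0 le_rfl one_pos]
  have hnn1 : (0:ℝ) ≤ (((d - 1 : ℕ):ℝ) + (d:ℝ)*ε)/d :=
    div_nonneg (add_nonneg (Nat.cast_nonneg _) (mul_nonneg hdR.le hε.le)) hdR.le
  have hnn2 : (0:ℝ) ≤ (((d - 1 : ℕ):ℝ) + 0)/d :=
    div_nonneg (add_nonneg (Nat.cast_nonneg _) le_rfl) hdR.le
  rw [ENNReal.toReal_pow, ENNReal.toReal_pow, ENNReal.toReal_ofReal hnn1,
    ENNReal.toReal_ofReal hnn2, e1, e2]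

lemma limit_aux (d : ℕ) (hd2 : 2 ≤ d) :
    Tendsto (fun ε : ℝ =>
        (d.factorial : ℝ) * ε^d / ((((d:ℝ)-1)/d + ε)^d - (((d:ℝ)-1)/d)^d)^d)
      (nhdsWithin 0 (Set.Ioi 0))
      (nhds ((d.factorial : ℝ) / d ^ d * ((1 - 1/(d:ℝ)) ^ d) ^ ((1:ℤ) - d))) := by
  have hdR : (0:ℝ) < d := by exact_mod_cast (by omega : 0 < d)
  have hd1 : (2:ℝ) ≤ d := by exact_mod_cast hd2
  set c : ℝ := ((d:ℝ)-1)/d with hc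
  have hc0 : 0 < c := by
    rw [hc]
    apply div_pos (by linarith) hdR
  have hder : HasDerivAt (fun x : ℝ => (c + x)^d) ((d:ℝ) * c^(d-1)) 0 := by
    have h1 : HasDerivAt (fun x : ℝ => c + x) 1 0 := (hasDerivAt_id 0).const_add c
    have h2 := h1.fun_pow d
    simpa using h2
  have hslope := hasDerivAt_iff_tendsto_slope.mp hder
  have h1 : Tendsto (fun ε : ℝ => ((c+ε)^d - c^d)/ε) (nhdsWithin 0 (Set.Ioi 0))
      (nhds ((d:ℝ) * c^(d-1))) := by
    have hmono : nhdsWithin (0:ℝ) (Set.Ioi 0) ≤ nhdsWithin 0 {0}ᶜ :=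
      nhdsWithin_mono 0 (fun x hx => ne_of_gt hx)
    refine Tendsto.congr (fun x => ?_) (hslope.mono_left hmono)
    rw [slope_def_field]
    norm_num
  have hne : (d:ℝ) * c^(d-1) ≠ 0 := by positivity
  have h2 : Tendsto (fun ε : ℝ => ε/((c+ε)^d - c^d)) (nhdsWithin 0 (Set.Ioi 0))
      (nhds (((d:ℝ) * c^(d-1))⁻¹)) := by
    refine Tendsto.congr (fun x => ?_) (h1.inv₀ hne)
    rw [inv_div]
  have h3 : Tendsto (fun ε : ℝ => (d.factorial:ℝ) * (ε/((c+ε)^d - c^d))^d)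
      (nhdsWithin 0 (Set.Ioi 0))
      (nhds ((d.factorial:ℝ) * (((d:ℝ) * c^(d-1))⁻¹)^d)) :=
    (h2.pow d).const_mul _
  have hval : (d.factorial:ℝ) * (((d:ℝ) * c^(d-1))⁻¹)^d =
      (d.factorial : ℝ) / d ^ d * ((1 - 1/(d:ℝ)) ^ d) ^ ((1:ℤ) - d) := by
    have hcc : 1 - 1/(d:ℝ) = c := by
      rw [hc]
      field_simp
    rw [hcc]
    have hz : ((1:ℤ) - d) = -((d - 1 : ℕ) : ℤ) := by
      push_cast [Nat.cast_sub (by omega : 1 ≤ d)]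
      ring
    rw [hz, zpow_neg, zpow_natCast]
    have hpow : ((c^(d-1))⁻¹)^d = ((c^d)^(d-1))⁻¹ := by
      rw [inv_pow, ← pow_mul, ← pow_mul, Nat.mul_comm]
    rw [mul_inv, mul_pow, inv_pow, hpow]
    ring
  rw [hval] at h3
  refine Tendsto.congr (fun ε => ?_) h3
  rw [div_pow, mul_div_assoc]

end Aux

/-- For a LHS of `N = d` points in `[0,1)^d` and
`D(ε) = [0,(d-1)/d+ε)^d \ [0,(d-1)/d)^d`, the ratio
`P(X_1,…,X_d ∈ D(ε)) / ∏_i P(X_i ∈ D(ε))` tends to `(d!/d^d)·((1-1/d)^d)^{1-d}`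
as `ε → 0⁺`. -/
theorem stmt5 {Ω : Type*} [MeasurableSpace Ω] (μ : Measure Ω) [IsProbabilityMeasure μ]
    (d : ℕ) (hd : 2 ≤ d)
    (X : Fin d → Ω → Fin d → ℝ) (π : Fin d → Ω → Equiv.Perm (Fin d))
    (U : Fin d → Ω → Fin d → ℝ) (h : IsLHS μ d d X π U)
    (D : ℝ → Set (Fin d → ℝ))
    (hD : ∀ ε : ℝ, D ε = anchoredBox (fun _ => ((d : ℝ) - 1) / d + ε) \
                        anchoredBox (fun _ => ((d : ℝ) - 1) / d)) :
    Filter.Tendsto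
      (fun ε : ℝ =>
        (μ {ω | ∀ n, X n ω ∈ D ε}).toReal / ∏ i : Fin d, (μ {ω | X i ω ∈ D ε}).toReal)
      (nhdsWithin 0 (Set.Ioi 0))
      (nhds ((d.factorial : ℝ) / d ^ d * ((1 - 1 / (d : ℝ)) ^ d) ^ ((1 : ℤ) - d))) := by
  have hd0 : 0 < d := by omega
  have hdR : (0:ℝ) < d := by exact_mod_cast hd0
  have hIoo : Set.Ioo (0:ℝ) (1/d) ∈ nhdsWithin (0:ℝ) (Set.Ioi 0) :=
    Ioo_mem_nhdsGT_of_mem ⟨le_refl 0, by positivity⟩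
  have heq : ∀ ε ∈ Set.Ioo (0:ℝ) (1/d),
      (μ {ω | ∀ n, X n ω ∈ D ε}).toReal / ∏ i : Fin d, (μ {ω | X i ω ∈ D ε}).toReal =
        (d.factorial : ℝ) * ε^d / ((((d:ℝ)-1)/d + ε)^d - (((d:ℝ)-1)/d)^d)^d := by
    rintro ε ⟨hε0, hε1⟩
    have hεd : (d:ℝ)*ε < 1 := by
      have := (lt_div_iff₀ hdR).mp hε1
      linarith
    have hnum : (μ {ω | ∀ n, X n ω ∈ D ε}).toReal = (d.factorial : ℝ) * ε^d := by
      rw [joint_prob h hd hε0 hεd (hD ε), ENNReal.toReal_mul, ENNReal.toReal_pow,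
        ENNReal.toReal_ofReal hε0.le, ENNReal.toReal_natCast]
    have hden : ∀ i : Fin d, (μ {ω | X i ω ∈ D ε}).toReal =
        (((d:ℝ)-1)/d + ε)^d - (((d:ℝ)-1)/d)^d := fun i => single_D h hd hε0 hεd (hD ε) i
    rw [hnum, Finset.prod_congr rfl fun i _ => hden i, Finset.prod_const,
      Finset.card_univ, Fintype.card_fin]
  refine Tendsto.congr' ?_ (limit_aux d hd)
  filter_upwards [hIoo] with ε hε
  exact (heq ε hε).symm

end LHSPaper
end
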